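/- arXiv:2206.15439 — 9 statements merged into one kernel-verified Lean document; each statement's English description precedes it below -/
import Mathlib

section
/- For any connected graph G with n ≥ 2 vertices, the outer-connected domination number of the middle graph M(G) satisfies ⌈n/2⌉ ≤ γ̃_c(M(G)) ≤ n. -/
open SimpleGraph

/-- `S` is a dominating set of `H`: every vertex is in `S` or adjacent to a vertex of `S`. -/
def IsDomSet {V : Type*} (H : SimpleGraph V) (S : Set V) : Prop :=
  ∀ v : V, ∃ u ∈ S, u = v ∨ H.Adj u v

/-- The connected domination number: minimum size of a dominating set inducing a
connected subgraph. -/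
noncomputable def connDomNum {V : Type*} (H : SimpleGraph V) : ℕ :=
  sInf {k | ∃ S : Set V, IsDomSet H S ∧ (H.induce S).Connected ∧ S.ncard = k}

/-- The outer-connected domination number: minimum size of a dominating set whose
complement induces a connected subgraph. -/
noncomputable def outConnDomNum {V : Type*} (H : SimpleGraph V) : ℕ :=
  sInf {k | ∃ S : Set V, IsDomSet H S ∧ (H.induce Sᶜ).Connected ∧ S.ncard = k}

/-- The middle graph `M(G)`: vertices are `V(G) ∪ E(G)`; a vertex is adjacent to its
incident edges, and two edges are adjacent iff they share a vertex. -/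
def middleGraph {V : Type*} (G : SimpleGraph V) : SimpleGraph (V ⊕ G.edgeSet) where
  Adj x y :=
    match x, y with
    | Sum.inl _, Sum.inl _ => False
    | Sum.inl v, Sum.inr e => v ∈ (e : Sym2 V)
    | Sum.inr e, Sum.inl v => v ∈ (e : Sym2 V)
    | Sum.inr e, Sum.inr f => e ≠ f ∧ ∃ v, v ∈ (e : Sym2 V) ∧ v ∈ (f : Sym2 V)
  symm := by
    constructor
    rintro (v | e) (w | f) h
    · exact h.elim
    · exact h
    · exact h
    · exact ⟨Ne.symm h.1, h.2.imp fun v hv => ⟨hv.2, hv.1⟩⟩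
  loopless := by
    constructor
    rintro (v | e) h
    · exact h
    · exact h.1 rfl

/-- The edge cover number `ρ(G)`: minimum number of edges covering all vertices. -/
noncomputable def edgeCoverNum {V : Type*} (G : SimpleGraph V) : ℕ :=
  sInf {k | ∃ C : Set (Sym2 V), C ⊆ G.edgeSet ∧ (∀ v : V, ∃ e ∈ C, v ∈ e) ∧ C.ncard = k}

/-- The wheel graph with hub `none` and a cycle on `ZMod n` (so `n + 1` vertices). -/
def wheelGraph (n : ℕ) : SimpleGraph (Option (ZMod n)) where
  Adj x y :=
    match x, y with
    | none, none => False
    | none, some _ => True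
    | some _, none => True
    | some i, some j => i ≠ j ∧ (i - j = 1 ∨ j - i = 1)
  symm := by
    constructor
    rintro (_ | i) (_ | j) h
    · exact h.elim
    · trivial
    · trivial
    · exact ⟨h.1.symm, h.2.symm⟩
  loopless := by
    constructor
    rintro (_ | i) h
    · exact h
    · exact h.1 rfl

/-- The friendship graph `F n`: `n` triangles sharing the common vertex `none`. -/
def friendshipGraph (n : ℕ) : SimpleGraph (Option (Fin n × Fin 2)) where
  Adj x y :=
    match x, y with
    | none, none => False
    | none, some _ => True
    | some _, none => True
    | some (i, a), some (j, b) => i = j ∧ a ≠ b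
  symm := by
    constructor
    rintro (_ | ⟨i, a⟩) (_ | ⟨j, b⟩) h
    · exact h.elim
    · trivial
    · trivial
    · exact ⟨h.1.symm, h.2.symm⟩
  loopless := by
    constructor
    rintro (_ | ⟨i, a⟩) h
    · exact h
    · exact h.2 rfl

/-- The corona `G ∘ K₁`: each vertex `Sum.inl v` of `G` gets a pendant vertex `Sum.inr v`. -/
def corona {V : Type*} (G : SimpleGraph V) : SimpleGraph (V ⊕ V) where
  Adj x y :=
    match x, y with
    | Sum.inl v, Sum.inl w => G.Adj v w
    | Sum.inl v, Sum.inr w => v = w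
    | Sum.inr v, Sum.inl w => v = w
    | Sum.inr _, Sum.inr _ => False
  symm := by
    constructor
    rintro (v | v) (w | w) h
    · exact G.adj_symm h
    · exact h.symm
    · exact h.symm
    · exact h.elim
  loopless := by
    constructor
    rintro (v | v) h
    · exact G.irrefl h
    · exact h

/-- The 2-corona `G ∘ P₂`: each vertex `Sum.inl v` of `G` gets a pendant path
`Sum.inl v — Sum.inr (Sum.inl v) — Sum.inr (Sum.inr v)`. -/
def corona2 {V : Type*} (G : SimpleGraph V) : SimpleGraph (V ⊕ (V ⊕ V)) where
  Adj x y :=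
    match x, y with
    | Sum.inl v, Sum.inl w => G.Adj v w
    | Sum.inl v, Sum.inr (Sum.inl w) => v = w
    | Sum.inr (Sum.inl v), Sum.inl w => v = w
    | Sum.inr (Sum.inl v), Sum.inr (Sum.inr w) => v = w
    | Sum.inr (Sum.inr v), Sum.inr (Sum.inl w) => v = w
    | _, _ => False
  symm := by
    constructor
    rintro (v | v | v) (w | w | w) h
    · exact G.adj_symm h
    · exact h.symm
    · exact h.elim
    · exact h.symm
    · exact h.elim
    · exact h.symm
    · exact h.elim
    · exact h.symm
    · exact h.elim
  loopless := by
    constructor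
    rintro (v | v | v) h
    · exact G.irrefl h
    · exact h
    · exact h

/-- The join `G + K̄ p` of `G` with the empty graph on `p` vertices. -/
def joinEmpty {V : Type*} (G : SimpleGraph V) (p : ℕ) : SimpleGraph (V ⊕ Fin p) where
  Adj x y :=
    match x, y with
    | Sum.inl v, Sum.inl w => G.Adj v w
    | Sum.inl _, Sum.inr _ => True
    | Sum.inr _, Sum.inl _ => True
    | Sum.inr _, Sum.inr _ => False
  symm := by
    constructor
    rintro (v | v) (w | w) h
    · exact G.adj_symm h
    · trivial
    · trivial
    · exact h.elim
  loopless := by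
    constructor
    rintro (v | v) h
    · exact G.irrefl h
    · exact h

private lemma mem_compl_range_inl {V : Type*} {G : SimpleGraph V} (e : G.edgeSet) :
    (Sum.inr e : V ⊕ G.edgeSet) ∈ (Set.range (Sum.inl : V → V ⊕ G.edgeSet))ᶜ := by
  simp

private lemma edge_reach_of_share {V : Type*} {G : SimpleGraph V} (e g : G.edgeSet) (v : V)
    (hv : v ∈ (e : Sym2 V)) (hv' : v ∈ (g : Sym2 V)) :
    ((middleGraph G).induce (Set.range (Sum.inl : V → V ⊕ G.edgeSet))ᶜ).Reachable
      ⟨Sum.inr e, mem_compl_range_inl e⟩ ⟨Sum.inr g, mem_compl_range_inl g⟩ := by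
  by_cases h : e = g
  · subst h; exact SimpleGraph.Reachable.refl _
  · exact SimpleGraph.Adj.reachable ⟨h, v, hv, hv'⟩

private lemma line_reach {V : Type*} {G : SimpleGraph V} {a b : V} (p : G.Walk a b)
    (f : G.edgeSet) (hf : b ∈ (f : Sym2 V)) :
    ∀ (e : G.edgeSet), a ∈ (e : Sym2 V) →
    ((middleGraph G).induce (Set.range (Sum.inl : V → V ⊕ G.edgeSet))ᶜ).Reachable
      ⟨Sum.inr e, mem_compl_range_inl e⟩ ⟨Sum.inr f, mem_compl_range_inl f⟩ := by
  induction p with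
  | nil => exact fun e he => edge_reach_of_share e f _ he hf
  | @cons a c b h p ih =>
    intro e he
    have hg : s(a, c) ∈ G.edgeSet := h
    exact (edge_reach_of_share e (⟨s(a, c), hg⟩ : G.edgeSet) a he (Sym2.mem_mk_left a c)).trans
      (ih hf (⟨s(a, c), hg⟩ : G.edgeSet) (Sym2.mem_mk_right a c))

theorem stmt1 {V : Type*} [Fintype V] (G : SimpleGraph V) (n : ℕ)
    (hn : Fintype.card V = n) (h2 : 2 ≤ n) (hc : G.Connected) :
    (n + 1) / 2 ≤ outConnDomNum (middleGraph G) ∧ outConnDomNum (middleGraph G) ≤ n := by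
  classical
  -- There is at least one edge
  obtain ⟨v0, w0, hvw⟩ : ∃ a b : V, a ≠ b := Fintype.exists_pair_of_one_lt_card (by omega)
  obtain ⟨p0⟩ := hc.preconnected v0 w0
  have hedge : ∃ e : Sym2 V, e ∈ G.edgeSet := by
    cases p0 with
    | nil => exact absurd rfl hvw
    | cons h _ => exact ⟨s(v0, _), h⟩
  set S0 : Set (V ⊕ G.edgeSet) := Set.range Sum.inl with hS0
  have hdom : IsDomSet (middleGraph G) S0 := by
    rintro (v | e)
    · exact ⟨Sum.inl v, ⟨v, rfl⟩, Or.inl rfl⟩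
    · exact ⟨Sum.inl (Quot.out (e : Sym2 V)).1, ⟨_, rfl⟩, Or.inr (Sym2.out_fst_mem _)⟩
  have hconn : ((middleGraph G).induce S0ᶜ).Connected := by
    rw [SimpleGraph.connected_iff]
    obtain ⟨esym, he⟩ := hedge
    refine ⟨?_, ⟨⟨Sum.inr ⟨esym, he⟩, mem_compl_range_inl _⟩⟩⟩
    rintro ⟨(x | e), hx⟩ ⟨(y | f), hy⟩
    · exact absurd ⟨x, rfl⟩ hx
    · exact absurd ⟨x, rfl⟩ hx
    · exact absurd ⟨y, rfl⟩ hy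
    · obtain ⟨p⟩ := hc.preconnected (Quot.out (e : Sym2 V)).1 (Quot.out (f : Sym2 V)).1
      exact line_reach p f (Sym2.out_fst_mem _) e (Sym2.out_fst_mem _)
  have hcard : S0.ncard = n := by
    rw [hS0, ← Set.image_univ, Set.ncard_image_of_injective _ Sum.inl_injective,
      Set.ncard_univ, Nat.card_eq_fintype_card, hn]
  have hmem : n ∈ {k | ∃ S : Set (V ⊕ G.edgeSet), IsDomSet (middleGraph G) S ∧
      ((middleGraph G).induce Sᶜ).Connected ∧ S.ncard = k} := ⟨S0, hdom, hconn, hcard⟩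
  constructor
  · apply le_csInf ⟨n, hmem⟩
    rintro k ⟨S, hS, -, rfl⟩
    choose g hgS hgP using fun v : V => hS (Sum.inl v)
    have hfib : ∀ u ∈ Finset.univ.image g,
        (Finset.univ.filter (fun v => g v = u)).card ≤ 2 := by
      rintro (w | e) _
      · have hsub : Finset.univ.filter (fun v => g v = Sum.inl w) ⊆ {w} := by
          intro v hv
          simp only [Finset.mem_filter, Finset.mem_univ, true_and] at hv
          rcases hgP v with h | h
          · rw [hv] at h
            simp only [Sum.inl.injEq] at h
            simp [h]
          · rw [hv] at h
            exact h.elim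
        calc (Finset.univ.filter (fun v => g v = Sum.inl w)).card
            ≤ ({w} : Finset V).card := Finset.card_le_card hsub
          _ ≤ 2 := by simp
      · have hsub : Finset.univ.filter (fun v => g v = Sum.inr e) ⊆
            {(Quot.out (e : Sym2 V)).1, (Quot.out (e : Sym2 V)).2} := by
          intro v hv
          simp only [Finset.mem_filter, Finset.mem_univ, true_and] at hv
          rcases hgP v with h | h
          · rw [hv] at h; exact absurd h (by simp)
          · rw [hv] at h
            have hv' : v ∈ (e : Sym2 V) := h
            rw [← (e : Sym2 V).out_eq, Sym2.mem_iff] at hv'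
            simpa using hv'
        calc (Finset.univ.filter (fun v => g v = Sum.inr e)).card
            ≤ _ := Finset.card_le_card hsub
          _ ≤ 2 := Finset.card_insert_le _ _ |>.trans (by simp)
    have h1 : Fintype.card V ≤ 2 * (Finset.univ.image g).card := by
      simpa using Finset.card_le_mul_card_image Finset.univ 2 hfib
    have h2' : ((Finset.univ.image g : Finset (V ⊕ G.edgeSet)) : Set (V ⊕ G.edgeSet)).ncard
        ≤ S.ncard := by
      apply Set.ncard_le_ncard _ (Set.toFinite S)
      intro u hu
      simp only [Finset.coe_image, Finset.coe_univ, Set.image_univ, Set.mem_range] at hu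
      obtain ⟨v, rfl⟩ := hu
      exact hgS v
    rw [Set.ncard_coe_finset] at h2'
    omega
  · exact Nat.sInf_le hmem
end

section
/- For any tree T with n ≥ 2 vertices, the outer-connected domination number of the middle graph M(T) equals n. -/
open SimpleGraph

lemma aux_edge_reach {V : Type*} (T : SimpleGraph V) (e0 : Sym2 V) {f : Sym2 V}
    (hf : f ∈ T.edgeSet) (hne : f ≠ e0) {w1 w2 : V} (h1 : w1 ∈ f) (h2 : w2 ∈ f) :
    (T \ fromEdgeSet {e0}).Reachable w1 w2 := by
  induction f with
  | _ a b =>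
    rw [SimpleGraph.mem_edgeSet] at hf
    have hadj : (T \ fromEdgeSet {e0}).Adj a b := by
      simp only [sdiff_adj, fromEdgeSet_adj, Set.mem_singleton_iff, not_and, not_ne_iff]
      exact ⟨hf, fun h => absurd (h.symm) (fun h' => hne (h'.symm ▸ rfl))⟩
    rcases Sym2.mem_iff.mp h1 with rfl | rfl <;> rcases Sym2.mem_iff.mp h2 with rfl | rfl
    · exact Reachable.refl _
    · exact hadj.reachable
    · exact hadj.symm.reachable
    · exact Reachable.refl _

lemma aux_invariant {W : Type*} {G : SimpleGraph W} {P : W → Prop}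
    (h : ∀ x y, G.Adj x y → (P x ↔ P y)) {x y : W} (hr : G.Reachable x y) :
    P x ↔ P y := by
  obtain ⟨w⟩ := hr
  induction w with
  | nil => rfl
  | cons a _ ih => exact (h _ _ a).trans ih

/-- Key contradiction: if `S` has connected complement in `M(T)` (T a tree), an edge of `S`
cannot have both endpoints outside `S`. -/
lemma aux_no_shared {V : Type*} {T : SimpleGraph V} (hT : T.IsTree)
    {S : Set (V ⊕ T.edgeSet)} (hconn : ((middleGraph T).induce Sᶜ).Connected)
    (e : T.edgeSet) (heS : Sum.inr e ∈ S) {v1 v2 : V} (h1 : v1 ∈ e.1) (h2 : v2 ∈ e.1)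
    (hvne : v1 ≠ v2) (hv1 : Sum.inl v1 ∉ S) (hv2 : Sum.inl v2 ∉ S) : False := by
  have hee : e.1 = s(v1, v2) := (Sym2.mem_and_mem_iff hvne).mp ⟨h1, h2⟩
  have hbridge : T.IsBridge e.1 :=
    (isAcyclic_iff_forall_edge_isBridge.mp hT.IsAcyclic) e.2
  rw [hee, isBridge_iff] at hbridge
  set H := T \ fromEdgeSet {e.1} with hH
  have hnr : ¬ H.Reachable v1 v2 := by rw [hH, hee]; exact hbridge
  -- invariant predicate on vertices of the induced graph
  set P : (Sᶜ : Set (V ⊕ T.edgeSet)) → Prop :=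
    fun x => match x.1 with
    | Sum.inl w => H.Reachable v1 w
    | Sum.inr f => ∃ w ∈ f.1, H.Reachable v1 w with hP
  have hexy : ∀ (f : T.edgeSet), f ≠ e → ∀ w ∈ f.1, ∀ w' ∈ f.1, H.Reachable w w' := by
    intro f hfe w hw w' hw'
    exact aux_edge_reach T e.1 f.2 (fun h => hfe (Subtype.ext h)) hw hw'
  have hinv : ∀ x y, ((middleGraph T).induce Sᶜ).Adj x y → (P x ↔ P y) := by
    rintro ⟨(v | f), hx⟩ ⟨(w | g), hy⟩ hadj
    · exact hadj.elim
    · -- inl v ~ inr g : v ∈ g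
      have hvg : v ∈ g.1 := hadj
      have hge : g ≠ e := fun h => hy (h ▸ heS)
      simp only [hP]
      constructor
      · intro hr; exact ⟨v, hvg, hr⟩
      · rintro ⟨w', hw', hr⟩; exact hr.trans (hexy g hge w' hw' v hvg)
    · have hvg : w ∈ f.1 := hadj
      have hge : f ≠ e := fun h => hx (h ▸ heS)
      simp only [hP]
      constructor
      · rintro ⟨w', hw', hr⟩; exact hr.trans (hexy f hge w' hw' w hvg)
      · intro hr; exact ⟨w, hvg, hr⟩
    · obtain ⟨hfg, u, huf, hug⟩ := hadj
      have hfe : f ≠ e := fun h => hx (h ▸ heS)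
      have hge : g ≠ e := fun h => hy (h ▸ heS)
      simp only [hP]
      constructor
      · rintro ⟨w', hw', hr⟩
        exact ⟨u, hug, hr.trans (hexy f hfe w' hw' u huf)⟩
      · rintro ⟨w', hw', hr⟩
        exact ⟨u, huf, hr.trans (hexy g hge w' hw' u hug)⟩
  have hreach := hconn.preconnected ⟨Sum.inl v1, hv1⟩ ⟨Sum.inl v2, hv2⟩
  have := (aux_invariant hinv hreach).mp (by simp only [hP]; exact Reachable.refl v1)
  exact hnr this

/-- For the upper bound: any two edges are reachable in the induced subgraph on edges. -/
lemma aux_line_reach {V : Type*} {T : SimpleGraph V} {x y : V} (W : T.Walk x y)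
    (f : T.edgeSet) (hy : y ∈ f.1) :
    ∀ e : T.edgeSet, x ∈ e.1 →
    ((middleGraph T).induce (Set.range (Sum.inl : V → V ⊕ T.edgeSet))ᶜ).Reachable
      ⟨Sum.inr e, by simp⟩ ⟨Sum.inr f, by simp⟩ := by
  induction W with
  | nil =>
    intro e hx
    by_cases hef : e = f
    · subst hef; exact Reachable.refl _
    · exact Adj.reachable (by exact ⟨hef, _, hx, hy⟩)
  | @cons a b c hab W ih =>
    intro e hx
    have hg : s(a, b) ∈ T.edgeSet := hab
    set g : T.edgeSet := ⟨s(a, b), hg⟩ with hgdef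
    have step : ((middleGraph T).induce (Set.range (Sum.inl : V → V ⊕ T.edgeSet))ᶜ).Reachable
        ⟨Sum.inr e, by simp⟩ ⟨Sum.inr g, by simp⟩ := by
      by_cases hef : e = g
      · subst hef; exact Reachable.refl _
      · exact Adj.reachable (by exact ⟨hef, a, hx, Sym2.mem_mk_left a b⟩)
    exact step.trans (ih hy g (Sym2.mem_mk_right a b))

theorem stmt2 {V : Type*} [Fintype V] (T : SimpleGraph V) (n : ℕ)
    (hn : Fintype.card V = n) (h2 : 2 ≤ n) (hT : T.IsTree) :
    outConnDomNum (middleGraph T) = n := by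
  classical
  set S0 : Set (V ⊕ T.edgeSet) := Set.range Sum.inl with hS0
  have hdom : IsDomSet (middleGraph T) S0 := by
    rintro (v | e)
    · exact ⟨Sum.inl v, ⟨v, rfl⟩, Or.inl rfl⟩
    · exact ⟨Sum.inl e.1.out.1, ⟨_, rfl⟩, Or.inr (Sym2.out_fst_mem e.1)⟩
  have hconn : ((middleGraph T).induce S0ᶜ).Connected := by
    rw [connected_iff]
    constructor
    · rintro ⟨(v | e), hx⟩ ⟨(w | f), hy⟩
      · exact absurd ⟨v, rfl⟩ hx
      · exact absurd ⟨v, rfl⟩ hx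
      · exact absurd ⟨w, rfl⟩ hy
      · obtain ⟨W⟩ := hT.isConnected.preconnected e.1.out.1 f.1.out.1
        exact aux_line_reach W f (Sym2.out_fst_mem f.1) e (Sym2.out_fst_mem e.1)
    · have h1 : 1 < Fintype.card V := by omega
      obtain ⟨v, w, hvw⟩ := Fintype.exists_pair_of_one_lt_card h1
      obtain ⟨W⟩ := hT.isConnected.preconnected v w
      cases W with
      | nil => exact absurd rfl hvw
      | cons h p =>
        rename_i b
        refine ⟨⟨Sum.inr ⟨s(v, b), T.mem_edgeSet.mpr h⟩, ?_⟩⟩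
        simp [hS0]
  have hcard : S0.ncard = n := by
    rw [← Nat.card_coe_set_eq, Nat.card_range_of_injective Sum.inl_injective,
      Nat.card_eq_fintype_card, hn]
  have hmem : n ∈ {k | ∃ S : Set (V ⊕ T.edgeSet), IsDomSet (middleGraph T) S ∧
      ((middleGraph T).induce Sᶜ).Connected ∧ S.ncard = k} := ⟨S0, hdom, hconn, hcard⟩
  refine le_antisymm (Nat.sInf_le hmem) (le_csInf ⟨n, hmem⟩ ?_)
  rintro k ⟨S, hdomS, hconnS, rfl⟩
  have hchoice : ∀ v : V, Sum.inl v ∉ S → ∃ e : T.edgeSet, Sum.inr e ∈ S ∧ v ∈ e.1 := by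
    intro v hv
    obtain ⟨u, huS, hu⟩ := hdomS (Sum.inl v)
    rcases hu with rfl | hadj
    · exact absurd huS hv
    · cases u with
      | inl w => exact hadj.elim
      | inr e => exact ⟨e, huS, hadj⟩
  choose F hFS hFmem using hchoice
  have hginj : Function.Injective (fun v : V =>
      if h : Sum.inl v ∈ S then (⟨Sum.inl v, h⟩ : ↥S) else ⟨Sum.inr (F v h), hFS v h⟩) := by
    intro v w hvw
    have hval := congrArg Subtype.val hvw
    by_cases hv : Sum.inl v ∈ S <;> by_cases hw : Sum.inl w ∈ S
    · simp only [dif_pos hv, dif_pos hw] at hval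
      exact Sum.inl_injective hval
    · simp only [dif_pos hv, dif_neg hw] at hval
      exact absurd hval (by simp)
    · simp only [dif_neg hv, dif_pos hw] at hval
      exact absurd hval (by simp)
    · simp only [dif_neg hv, dif_neg hw] at hval
      have hFeq : F v hv = F w hw := Sum.inr_injective hval
      by_contra hne
      exact aux_no_shared hT hconnS (F v hv) (hFS v hv) (hFmem v hv)
        (hFeq ▸ hFmem w hw) hne hv hw
  have hle : Nat.card V ≤ Nat.card ↥S := Nat.card_le_card_of_injective _ hginj
  rw [Nat.card_eq_fintype_card, hn, Nat.card_coe_set_eq] at hle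
  exact hle
end

section
/- Let G be a connected graph with n ≥ 4 vertices. Then γ̃_c(M(G)) = n if and only if G is a tree. -/
open SimpleGraph

section Aux

open Sum

variable {V : Type*} {G : SimpleGraph V}

lemma edge_endpoints {H : SimpleGraph V} :
    ∀ {z : Sym2 V}, z ∈ H.edgeSet → ∃ a b, H.Adj a b ∧ z = s(a, b) := by
  intro z
  induction z using Sym2.ind with
  | _ a b => intro h; exact ⟨a, b, h, rfl⟩

lemma exists_adj_of_connected [Fintype V] (h2 : 2 ≤ Fintype.card V) (hc : G.Connected) :
    ∃ a b : V, G.Adj a b := by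
  have : Nontrivial V := Fintype.one_lt_card_iff_nontrivial.1 h2
  obtain ⟨a, b, hab⟩ := exists_pair_ne V
  obtain ⟨w⟩ := hc.preconnected a b
  cases w with
  | nil => exact absurd rfl hab
  | cons h _ => exact ⟨_, _, h⟩

/-- Two edges of `A` containing a common vertex are reachable in the induced subgraph. -/
lemma middle_step {A : Set (V ⊕ G.edgeSet)} (e f : G.edgeSet)
    (he : Sum.inr e ∈ A) (hf : Sum.inr f ∈ A) (a : V) (hae : a ∈ e.val) (haf : a ∈ f.val) :
    ((middleGraph G).induce A).Reachable ⟨Sum.inr e, he⟩ ⟨Sum.inr f, hf⟩ := by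
  by_cases hef : e = f
  · subst hef; exact SimpleGraph.Reachable.refl _
  · exact SimpleGraph.Adj.reachable
      (show (middleGraph G).Adj (Sum.inr e) (Sum.inr f) from ⟨hef, a, hae, haf⟩)

/-- Connectivity criterion for induced subgraphs of the middle graph. -/
lemma middle_induce_connected {H : SimpleGraph V} (hle : H ≤ G)
    (hH : H.Preconnected) (A : Set (V ⊕ G.edgeSet))
    (hHA : ∀ e : G.edgeSet, Sum.inr e ∈ A ↔ e.val ∈ H.edgeSet)
    (hvert : ∀ v : V, Sum.inl v ∈ A → ∃ e : G.edgeSet, Sum.inr e ∈ A ∧ v ∈ e.val)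
    (hne : ∃ e : G.edgeSet, Sum.inr e ∈ A) :
    ((middleGraph G).induce A).Connected := by
  have key : ∀ (a b : V) (w : H.Walk a b) (e f : G.edgeSet) (he : Sum.inr e ∈ A)
      (hf : Sum.inr f ∈ A), a ∈ e.val → b ∈ f.val →
      ((middleGraph G).induce A).Reachable ⟨Sum.inr e, he⟩ ⟨Sum.inr f, hf⟩ := by
    intro a b w
    induction w with
    | nil =>
      intro e f he hf hae haf
      exact middle_step e f he hf _ hae haf
    | @cons a c b hadj w ih =>
      intro e f he hf hae hbf
      have hgG : s(a, c) ∈ G.edgeSet := hle hadj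
      set g : G.edgeSet := ⟨s(a, c), hgG⟩ with hg
      have hgA : Sum.inr g ∈ A := (hHA g).2 hadj
      refine (middle_step e g he hgA a hae ?_).trans
        (ih g f hgA hf ?_ hbf)
      · exact Sym2.mem_mk_left a c
      · exact Sym2.mem_mk_right a c
  have toEdge : ∀ (x : V ⊕ G.edgeSet) (hx : x ∈ A), ∃ (e : G.edgeSet) (he : Sum.inr e ∈ A),
      ((middleGraph G).induce A).Reachable ⟨x, hx⟩ ⟨Sum.inr e, he⟩ := by
    rintro (v | e) hx
    · obtain ⟨e, he, hv⟩ := hvert v hx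
      exact ⟨e, he, SimpleGraph.Adj.reachable
        (show (middleGraph G).Adj (Sum.inl v) (Sum.inr e) from hv)⟩
    · exact ⟨e, hx, SimpleGraph.Reachable.refl _⟩
  have hnonempty : Nonempty {x // x ∈ A} := by
    obtain ⟨e, he⟩ := hne
    exact ⟨⟨Sum.inr e, he⟩⟩
  refine ⟨?_⟩
  rintro ⟨x, hx⟩ ⟨y, hy⟩
  obtain ⟨e, he, hxe⟩ := toEdge x hx
  obtain ⟨f, hf, hyf⟩ := toEdge y hy
  refine hxe.trans (SimpleGraph.Reachable.trans ?_ hyf.symm)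
  obtain ⟨a, b, hab, habe⟩ := edge_endpoints ((hHA e).1 he)
  obtain ⟨a', b', hab', habf⟩ := edge_endpoints ((hHA f).1 hf)
  obtain ⟨w⟩ := hH a a'
  refine key a a' w e f he hf ?_ ?_
  · rw [habe]; exact Sym2.mem_mk_left a b
  · rw [habf]; exact Sym2.mem_mk_left a' b'

/-- Projecting a walk of the induced middle graph between two original vertices
to a walk of `G` all of whose edges are in `A`. -/
lemma walk_project_aux {A : Set (V ⊕ G.edgeSet)} :
    ∀ (z z' : {x // x ∈ A}) (_ : ((middleGraph G).induce A).Walk z z') (v' : V),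
      z'.val = Sum.inl v' →
      ((∀ v, z.val = Sum.inl v →
        ∃ w : G.Walk v v', ∀ ep ∈ w.edges, ∃ h : ep ∈ G.edgeSet,
          Sum.inr (⟨ep, h⟩ : G.edgeSet) ∈ A) ∧
       (∀ e : G.edgeSet, z.val = Sum.inr e → ∀ u, u ∈ e.val →
        ∃ w : G.Walk u v', ∀ ep ∈ w.edges, ∃ h : ep ∈ G.edgeSet,
          Sum.inr (⟨ep, h⟩ : G.edgeSet) ∈ A)) := by
  intro z z' p
  induction p with
  | nil =>
    rename_i zz
    intro v' hv'
    constructor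
    · intro v hv
      rw [hv'] at hv
      obtain rfl : v' = v := Sum.inl.inj hv
      exact ⟨SimpleGraph.Walk.nil, by simp⟩
    · intro e he
      rw [hv'] at he
      exact absurd he (by simp)
  | @cons zz yy zz' hadj q ih =>
    intro v' hv'
    have ih' := ih v' hv'
    obtain ⟨zval, hzA⟩ := zz
    obtain ⟨yval, hyA⟩ := yy
    have hadj' : (middleGraph G).Adj zval yval := hadj
    constructor
    · rintro v rfl
      cases yval with
      | inl y => exact hadj'.elim
      | inr e =>
        have hve : v ∈ e.val := hadj'
        exact ih'.2 e rfl v hve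
    · rintro e rfl
      intro u hu
      obtain ⟨eval, heG⟩ := e
      cases yval with
      | inl y =>
        have hye : y ∈ eval := hadj'
        obtain ⟨w, hw⟩ := ih'.1 y rfl
        by_cases huy : u = y
        · subst huy; exact ⟨w, hw⟩
        · have he2 : eval = s(u, y) := (Sym2.mem_and_mem_iff huy).1 ⟨hu, hye⟩
          subst he2
          have hGadj : G.Adj u y := heG
          refine ⟨SimpleGraph.Walk.cons hGadj w, ?_⟩
          intro ep hep
          rw [SimpleGraph.Walk.edges_cons, List.mem_cons] at hep
          rcases hep with rfl | hep
          · exact ⟨heG, hzA⟩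
          · exact hw ep hep
      | inr f =>
        obtain ⟨hnef, m, hme, hmf⟩ := hadj'
        obtain ⟨w, hw⟩ := ih'.2 f rfl m hmf
        by_cases hum : u = m
        · subst hum; exact ⟨w, hw⟩
        · have he2 : eval = s(u, m) := (Sym2.mem_and_mem_iff hum).1 ⟨hu, hme⟩
          subst he2
          have hGadj : G.Adj u m := heG
          refine ⟨SimpleGraph.Walk.cons hGadj w, ?_⟩
          intro ep hep
          rw [SimpleGraph.Walk.edges_cons, List.mem_cons] at hep
          rcases hep with rfl | hep
          · exact ⟨heG, hzA⟩
          · exact hw ep hep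

lemma walk_project {A : Set (V ⊕ G.edgeSet)} {v v' : V}
    (hv : Sum.inl v ∈ A) (hv' : Sum.inl v' ∈ A)
    (h : ((middleGraph G).induce A).Reachable ⟨Sum.inl v, hv⟩ ⟨Sum.inl v', hv'⟩) :
    ∃ w : G.Walk v v', ∀ ep ∈ w.edges, ∃ h : ep ∈ G.edgeSet,
      Sum.inr (⟨ep, h⟩ : G.edgeSet) ∈ A := by
  obtain ⟨p⟩ := h
  exact (walk_project_aux ⟨Sum.inl v, hv⟩ ⟨Sum.inl v', hv'⟩ p v' rfl).1 v rfl

lemma exists_incident_edge {u x : V} (p : G.Walk u x) (hp : p.length ≠ 0) :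
    ∃ z, G.Adj u z ∧ s(u, z) ∈ p.edges := by
  cases p with
  | nil => simp at hp
  | cons h q => exact ⟨_, h, by simp⟩

/-- The lower bound: in a tree, every outer-connected dominating set of the middle graph
has at least `n` elements. -/
lemma tree_lower [Fintype V] (ht : G.IsTree) (n : ℕ)
    (hn : Fintype.card V = n) (h4 : 4 ≤ n)
    (S : Set (V ⊕ G.edgeSet)) (hdom : IsDomSet (middleGraph G) S)
    (hconn : ((middleGraph G).induce Sᶜ).Connected) : n ≤ S.ncard := by
  classical
  have hc : G.Connected := ht.isConnected
  have hE : Nat.card G.edgeSet = n - 1 := by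
    have := ht.card_edgeFinset
    rw [Nat.card_eq_fintype_card, ← SimpleGraph.edgeFinset_card]
    omega
  set CV : Set V := {v : V | Sum.inl v ∈ Sᶜ} with hCV
  set EE : Set G.edgeSet := {e : G.edgeSet | Sum.inr e ∈ Sᶜ} with hEE
  set SE : Set G.edgeSet := {e : G.edgeSet | Sum.inr e ∈ S} with hSE
  have hsplit : Sᶜ = Sum.inl '' CV ∪ Sum.inr '' EE := by
    ext x
    cases x with
    | inl v => simp [hCV]
    | inr e => simp [hEE]
  have hncardC : Sᶜ.ncard = CV.ncard + EE.ncard := by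
    rw [hsplit, Set.ncard_union_eq (by
      rw [Set.disjoint_left]; rintro x ⟨v, _, rfl⟩ ⟨e, _, h⟩; exact Sum.inl_ne_inr h.symm)
      (Set.toFinite _) (Set.toFinite _),
      Set.ncard_image_of_injective _ Sum.inl_injective,
      Set.ncard_image_of_injective _ Sum.inr_injective]
  have hEESE : EE.ncard + SE.ncard = n - 1 := by
    have : SE = EEᶜ := by ext e; simp [hSE, hEE]
    rw [this, Set.ncard_add_ncard_compl, hE]
  -- the contradiction lemma
  have hcontra : ∀ v v', v ∈ CV → v' ∈ CV → v ≠ v' → ∀ e : G.edgeSet,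
      Sum.inr e ∈ S → v ∈ e.val → v' ∈ e.val → False := by
    intro v v' hv hv' hne e heS hve hv'e
    have he2 : e.val = s(v, v') := (Sym2.mem_and_mem_iff hne).1 ⟨hve, hv'e⟩
    have hGadj : G.Adj v v' := by
      rw [← SimpleGraph.mem_edgeSet, ← he2]; exact e.2
    obtain ⟨w, hw⟩ := walk_project hv hv' (hconn.preconnected _ _)
    have huniq := ht.existsUnique_path v v'
    have h1 : w.toPath.val = (SimpleGraph.Path.singleton hGadj).val := by
      have := huniq.unique w.toPath.property (SimpleGraph.Path.singleton hGadj).property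
      exact this
    have hmem : s(v, v') ∈ (w.toPath : G.Walk v v').edges := by
      rw [h1]; simp [SimpleGraph.Path.singleton]
    have hmem' : s(v, v') ∈ w.edges := SimpleGraph.Walk.edges_toPath_subset w hmem
    obtain ⟨hG2, hA2⟩ := hw _ hmem'
    have : (⟨s(v, v'), hG2⟩ : G.edgeSet) = e := Subtype.ext he2.symm
    rw [this] at hA2
    exact hA2 heS
  -- injection from CV to SE
  have hedge : ∃ a b : V, G.Adj a b :=
    exists_adj_of_connected (by omega) hc
  have hEne : Nonempty G.edgeSet := by
    obtain ⟨a, b, hab⟩ := hedge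
    exact ⟨⟨s(a, b), hab⟩⟩
  have hex : ∀ v ∈ CV, ∃ e : G.edgeSet, Sum.inr e ∈ S ∧ v ∈ e.val := by
    intro v hv
    obtain ⟨u, huS, hu⟩ := hdom (Sum.inl v)
    rcases hu with rfl | hadj
    · exact absurd huS hv
    · cases u with
      | inl u' => exact hadj.elim
      | inr e => exact ⟨e, huS, hadj⟩
  set f : V → G.edgeSet := fun v =>
    if h : ∃ e : G.edgeSet, Sum.inr e ∈ S ∧ v ∈ e.val then h.choose else Classical.arbitrary _
    with hf
  have hfspec : ∀ v ∈ CV, Sum.inr (f v) ∈ S ∧ v ∈ (f v).val := by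
    intro v hv
    have h := hex v hv
    simp only [hf, dif_pos h]
    exact h.choose_spec
  have hinj : CV.ncard ≤ SE.ncard := by
    apply Set.ncard_le_ncard_of_injOn f
    · intro v hv; exact (hfspec v hv).1
    · intro v hv v' hv' heq
      by_contra hne
      exact hcontra v v' hv hv' hne (f v) (hfspec v hv).1 (hfspec v hv).2
        (heq ▸ (hfspec v' hv').2)
  have htotal : S.ncard + Sᶜ.ncard = n + (n - 1) := by
    rw [Set.ncard_add_ncard_compl, Nat.card_sum, Nat.card_eq_fintype_card, hn, hE]
  omega

end Aux

theorem stmt5 {V : Type*} [Fintype V] (G : SimpleGraph V) (n : ℕ)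
    (hn : Fintype.card V = n) (h4 : 4 ≤ n) (hc : G.Connected) :
    outConnDomNum (middleGraph G) = n ↔ G.IsTree := by
  classical
  have hedge : ∃ a b : V, G.Adj a b := exists_adj_of_connected (by omega) hc
  constructor
  · intro heq
    by_contra hnt
    obtain ⟨v, c, hcyc⟩ : ∃ (v : V) (c : G.Walk v v), c.IsCycle := by
      by_contra hcon
      push_neg at hcon
      exact hnt ⟨hc, fun v c hc' => hcon v c hc'⟩
    cases c with
    | nil => exact hcyc.ne_nil rfl
    | @cons _ w _ h p =>
      have hcyc0 := hcyc
      rw [SimpleGraph.Walk.cons_isCycle_iff] at hcyc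
      obtain ⟨hpath, hnotmem⟩ := hcyc
      have h3 : 3 ≤ (SimpleGraph.Walk.cons h p).length := hcyc0.three_le_length
      have hplen : p.length ≠ 0 := by
        rw [SimpleGraph.Walk.length_cons] at h3; omega
      set e0 : Sym2 V := s(v, w) with he0def
      have he0 : e0 ∈ G.edgeSet := h
      set e0s : G.edgeSet := ⟨e0, he0⟩ with he0s
      set H2 := G.deleteEdges {e0} with hH2
      have hq : H2.Walk w v := p.toDeleteEdges {e0} (by
        intro e' he'
        simp only [Set.mem_singleton_iff]
        rintro rfl
        exact hnotmem he')
      have hH2pre : H2.Preconnected := by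
        intro a b
        obtain ⟨wab⟩ := hc.preconnected a b
        induction wab with
        | nil => exact SimpleGraph.Reachable.refl _
        | @cons a' c' b' hadj wtail ih =>
          refine SimpleGraph.Reachable.trans ?_ ih
          by_cases hee : s(a', c') = e0
          · rw [he0def, Sym2.eq_iff] at hee
            rcases hee with ⟨rfl, rfl⟩ | ⟨rfl, rfl⟩
            · exact ⟨hq.reverse⟩
            · exact ⟨hq⟩
          · exact SimpleGraph.Adj.reachable
              (by rw [hH2, SimpleGraph.deleteEdges_adj]; exact ⟨hadj, by simpa using hee⟩)
      obtain ⟨zw, hzw, hzwmem⟩ := exists_incident_edge p hplen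
      obtain ⟨zv, hzv, hzvmem⟩ := exists_incident_edge p.reverse (by simpa using hplen)
      have hzvmem' : s(v, zv) ∈ p.edges := by
        rw [SimpleGraph.Walk.edges_reverse, List.mem_reverse] at hzvmem; exact hzvmem
      have hzwne : s(w, zw) ≠ e0 := fun hh => hnotmem (hh ▸ hzwmem)
      have hzvne : s(v, zv) ≠ e0 := fun hh => hnotmem (hh ▸ hzvmem')
      set S2 : Set (V ⊕ G.edgeSet) := (Sum.inl '' ({v, w} : Set V)ᶜ) ∪ {Sum.inr e0s} with hS2
      have hvw : v ≠ w := G.ne_of_adj h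
      have hinlS2 : ∀ z : V, Sum.inl z ∈ S2 ↔ z ∉ ({v, w} : Set V) := by
        intro z; simp [hS2]
      have hinrS2 : ∀ f : G.edgeSet, Sum.inr f ∈ S2 ↔ f = e0s := by
        intro f; simp [hS2]
      have hdom2 : IsDomSet (middleGraph G) S2 := by
        rintro (z | f)
        · by_cases hz : z ∈ ({v, w} : Set V)
          · refine ⟨Sum.inr e0s, (hinrS2 _).2 rfl, Or.inr ?_⟩
            show z ∈ e0
            rw [he0def, Sym2.mem_iff]
            simpa using hz
          · exact ⟨Sum.inl z, (hinlS2 z).2 hz, Or.inl rfl⟩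
        · by_cases hf : f = e0s
          · exact ⟨Sum.inr e0s, (hinrS2 _).2 rfl, Or.inl (by rw [hf])⟩
          · obtain ⟨a, b, hab, habf⟩ := edge_endpoints f.2
            have hz : ∃ z ∈ f.val, z ∉ ({v, w} : Set V) := by
              by_contra hcon
              push_neg at hcon
              have haab : a ∈ f.val := by rw [habf]; exact Sym2.mem_mk_left a b
              have hbab : b ∈ f.val := by rw [habf]; exact Sym2.mem_mk_right a b
              have ha := hcon a haab
              have hb := hcon b hbab
              have hne := G.ne_of_adj hab
              apply hf
              apply Subtype.ext
              rw [habf, he0s]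
              show s(a, b) = e0
              rw [he0def]
              simp only [Set.mem_insert_iff, Set.mem_singleton_iff] at ha hb
              rcases ha with rfl | rfl
              · rcases hb with rfl | rfl
                · exact absurd rfl hne
                · rfl
              · rcases hb with rfl | rfl
                · exact Sym2.eq_swap
                · exact absurd rfl hne
            obtain ⟨z, hzf, hznot⟩ := hz
            exact ⟨Sum.inl z, (hinlS2 z).2 hznot, Or.inr hzf⟩
      have hconn2 : ((middleGraph G).induce S2ᶜ).Connected := by
        apply middle_induce_connected (G.deleteEdges_le {e0}) hH2pre
        · intro f
          rw [Set.mem_compl_iff, hinrS2 f]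
          show ¬ _ ↔ _ ∈ (G.deleteEdges {e0}).edgeSet
          rw [SimpleGraph.edgeSet_deleteEdges]
          constructor
          · intro hff
            exact ⟨f.2, fun hmem => hff (Subtype.ext (by simpa using hmem))⟩
          · rintro ⟨-, hfe⟩ rfl
            exact hfe rfl
        · intro z hz
          rw [Set.mem_compl_iff, hinlS2, not_not] at hz
          simp only [Set.mem_insert_iff, Set.mem_singleton_iff] at hz
          rcases hz with rfl | rfl
          · refine ⟨⟨s(z, zv), hzv⟩, ?_, Sym2.mem_mk_left _ _⟩
            rw [Set.mem_compl_iff, hinrS2]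
            intro hh
            exact hzvne (by simpa [he0s, Subtype.ext_iff] using hh)
          · refine ⟨⟨s(z, zw), hzw⟩, ?_, Sym2.mem_mk_left _ _⟩
            rw [Set.mem_compl_iff, hinrS2]
            intro hh
            exact hzwne (by simpa [he0s, Subtype.ext_iff] using hh)
        · refine ⟨⟨s(v, zv), hzv⟩, ?_⟩
          rw [Set.mem_compl_iff, hinrS2]
          intro hh
          exact hzvne (by simpa [he0s, Subtype.ext_iff] using hh)
      have hmem : (n - 1) ∈ {k | ∃ S : Set (V ⊕ G.edgeSet), IsDomSet (middleGraph G) S ∧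
          ((middleGraph G).induce Sᶜ).Connected ∧ S.ncard = k} := by
        refine ⟨S2, hdom2, hconn2, ?_⟩
        have hd : Disjoint (Sum.inl '' ({v, w} : Set V)ᶜ) ({Sum.inr e0s} : Set (V ⊕ G.edgeSet)) := by
          rw [Set.disjoint_left]
          rintro x ⟨t, -, rfl⟩ hxx
          rw [Set.mem_singleton_iff] at hxx
          exact Sum.inl_ne_inr hxx
        rw [hS2, Set.ncard_union_eq hd (Set.toFinite _) (Set.toFinite _),
          Set.ncard_image_of_injective _ Sum.inl_injective, Set.ncard_singleton]
        have hcompl := Set.ncard_add_ncard_compl ({v, w} : Set V)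
        rw [Set.ncard_pair hvw] at hcompl
        have : Nat.card V = n := by rw [Nat.card_eq_fintype_card, hn]
        omega
      have hle' := Nat.sInf_le hmem
      unfold outConnDomNum at heq
      omega
  · intro ht
    have hmemn : n ∈ {k | ∃ S : Set (V ⊕ G.edgeSet), IsDomSet (middleGraph G) S ∧
        ((middleGraph G).induce Sᶜ).Connected ∧ S.ncard = k} := by
      refine ⟨Set.range Sum.inl, ?_, ?_, ?_⟩
      · rintro (z | f)
        · exact ⟨Sum.inl z, Set.mem_range_self _, Or.inl rfl⟩
        · obtain ⟨a, b, hab, habf⟩ := edge_endpoints f.2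
          refine ⟨Sum.inl a, Set.mem_range_self _, Or.inr ?_⟩
          show a ∈ f.val
          rw [habf]; exact Sym2.mem_mk_left a b
      · apply middle_induce_connected (le_refl G) hc.preconnected
        · intro f
          simp only [Set.mem_compl_iff, Set.mem_range]
          constructor
          · intro _; exact f.2
          · rintro - ⟨z, hz⟩
            exact Sum.inl_ne_inr hz
        · intro z hz
          exact absurd (Set.mem_range_self z) hz
        · obtain ⟨a, b, hab⟩ := hedge
          refine ⟨⟨s(a, b), hab⟩, ?_⟩
          simp only [Set.mem_compl_iff, Set.mem_range]
          rintro ⟨z, hz⟩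
          exact Sum.inl_ne_inr hz
      · rw [← Set.image_univ, Set.ncard_image_of_injective _ Sum.inl_injective,
          Set.ncard_univ, Nat.card_eq_fintype_card, hn]
    apply le_antisymm
    · exact Nat.sInf_le hmemn
    · refine le_csInf ⟨n, hmemn⟩ ?_
      rintro k ⟨S, hdom, hconn, rfl⟩
      exact tree_lower ht n hn h4 S hdom hconn
end

section
/- For any cycle C_n of order n ≥ 3, the outer-connected domination number of the middle graph satisfies γ̃_c(M(C_n)) = n − 1. -/
open SimpleGraph

section Scratch
open SimpleGraph
open Fin.NatCast Fin.CommRing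
variable {m : ℕ}

def cE (m : ℕ) (i : Fin (m+3)) : (cycleGraph (m+3)).edgeSet :=
  ⟨s(i, i+1), by rw [SimpleGraph.mem_edgeSet, cycleGraph_adj]; right; exact add_sub_cancel_left i 1⟩

lemma cE_coe (i : Fin (m+3)) : ((cE m i : (cycleGraph (m+3)).edgeSet) : Sym2 (Fin (m+3))) = s(i, i+1) := rfl

lemma mem_cE {v i : Fin (m+3)} : v ∈ ((cE m i : (cycleGraph (m+3)).edgeSet) : Sym2 (Fin (m+3))) ↔ v = i ∨ v = i + 1 := Sym2.mem_iff

lemma finThree_two_ne_zero : (2 : Fin (m+3)) ≠ 0 := by simp [Fin.ext_iff, Nat.mod_eq_of_lt (show 2 < m+3 by omega)]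

lemma cE_inj : Function.Injective (cE m) := by
  intro i j h
  have h2 : s(i, i+1) = s(j, j+1) := congrArg Subtype.val h
  rw [Sym2.eq_iff] at h2
  rcases h2 with ⟨h, -⟩ | ⟨h1, h2⟩
  · exact h
  · exfalso
    have h3 : i = i + 2 := by nth_rewrite 1 [h1]; rw [← h2]; ring
    exact finThree_two_ne_zero (left_eq_add.mp h3)

lemma cE_surj (e : (cycleGraph (m+3)).edgeSet) : ∃ i, cE m i = e := by
  obtain ⟨e, he⟩ := e
  induction e using Sym2.ind with
  | _ u v =>
    rw [SimpleGraph.mem_edgeSet, cycleGraph_adj] at he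
    rcases he with h | h
    · have hu : u = v + 1 := by rw [← h]; ring
      refine ⟨v, Subtype.ext ?_⟩
      show s(v, v+1) = s(u, v)
      rw [hu]; exact Sym2.eq_swap
    · have hv : v = u + 1 := by rw [← h]; ring
      refine ⟨u, Subtype.ext ?_⟩
      show s(u, u+1) = s(u, v)
      rw [hv]

lemma mAdj_inl_inr {V : Type*} {G : SimpleGraph V} {v : V} {e : G.edgeSet} :
    (middleGraph G).Adj (Sum.inl v) (Sum.inr e) ↔ v ∈ (e : Sym2 V) := Iff.rfl

lemma mAdj_inr_inl {V : Type*} {G : SimpleGraph V} {v : V} {e : G.edgeSet} :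
    (middleGraph G).Adj (Sum.inr e) (Sum.inl v) ↔ v ∈ (e : Sym2 V) := Iff.rfl

lemma mAdj_inr_inr {V : Type*} {G : SimpleGraph V} {e f : G.edgeSet} :
    (middleGraph G).Adj (Sum.inr e) (Sum.inr f) ↔
      e ≠ f ∧ ∃ v, v ∈ (e : Sym2 V) ∧ v ∈ (f : Sym2 V) := Iff.rfl

lemma mAdj_inl_inl {V : Type*} {G : SimpleGraph V} {v w : V} :
    ¬ (middleGraph G).Adj (Sum.inl v) (Sum.inl w) := fun h => h

-- adjacency between consecutive cycle edges in the middle graph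
lemma mAdj_cE_succ (i : Fin (m+3)) :
    (middleGraph (cycleGraph (m+3))).Adj (Sum.inr (cE m i)) (Sum.inr (cE m (i+1))) := by
  rw [mAdj_inr_inr]
  constructor
  · intro h
    have := cE_inj h
    exact one_ne_zero (left_eq_add.mp this)
  · exact ⟨i + 1, by rw [mem_cE]; right; rfl, by rw [mem_cE]; left; rfl⟩

lemma ind_adj {V : Type*} {G : SimpleGraph V} {s : Set V} {u v : ↥s}
    (h : G.Adj u.val v.val) : (G.induce s).Adj u v := h

lemma ind_adj' {V : Type*} {G : SimpleGraph V} {s : Set V} {u v : ↥s}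
    (h : (G.induce s).Adj u v) : G.Adj u.val v.val := h

def S0 (m : ℕ) : Set (Fin (m+3) ⊕ (cycleGraph (m+3)).edgeSet) :=
  Sum.inl '' ({0, 1} : Set (Fin (m+3)))ᶜ ∪ {Sum.inr (cE m 0)}

lemma mem_S0c_inl {v : Fin (m+3)} : Sum.inl v ∈ (S0 m)ᶜ ↔ v = 0 ∨ v = 1 := by
  simp [S0]; tauto

lemma mem_S0c_inr {e : (cycleGraph (m+3)).edgeSet} : Sum.inr e ∈ (S0 m)ᶜ ↔ e ≠ cE m 0 := by
  simp [S0]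

lemma S0_dom : IsDomSet (middleGraph (cycleGraph (m+3))) (S0 m) := by
  rintro (v | e)
  · by_cases h : v = 0 ∨ v = 1
    · refine ⟨Sum.inr (cE m 0), Or.inr rfl, Or.inr ?_⟩
      rw [mAdj_inr_inl, mem_cE]
      rcases h with h | h
      · left; exact h
      · right; rw [h, zero_add]
    · push_neg at h
      exact ⟨Sum.inl v, Or.inl ⟨v, by simp [h.1, h.2], rfl⟩, Or.inl rfl⟩
  · obtain ⟨i, rfl⟩ := cE_surj e
    by_cases h0 : i = 0
    · exact ⟨Sum.inr (cE m 0), Or.inr rfl, Or.inl (by rw [h0])⟩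
    by_cases h1 : i = 1
    · refine ⟨Sum.inl 2, Or.inl ⟨2, by simp [Fin.ext_iff, Nat.mod_eq_of_lt (show 2 < m+3 by omega)], rfl⟩, Or.inr ?_⟩
      rw [mAdj_inl_inr, mem_cE]
      right; rw [h1]; exact one_add_one_eq_two.symm
    · refine ⟨Sum.inl i, Or.inl ⟨i, by simp [h0, h1], rfl⟩, Or.inr ?_⟩
      rw [mAdj_inl_inr, mem_cE]; left; rfl

lemma cE_ne {i j : Fin (m+3)} (h : i ≠ j) : cE m i ≠ cE m j := fun hc => h (cE_inj hc)

lemma hub_mem : Sum.inr (cE m 1) ∈ (S0 m)ᶜ :=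
  mem_S0c_inr.mpr (cE_ne one_ne_zero)

noncomputable def hub (m : ℕ) : ↥(S0 m)ᶜ := ⟨Sum.inr (cE m 1), hub_mem⟩

lemma cast_mem (t : ℕ) (h1 : 1 ≤ t) (h2 : t < m+3) :
    Sum.inr (cE m (↑t : Fin (m+3))) ∈ (S0 m)ᶜ := by
  refine mem_S0c_inr.mpr (cE_ne ?_)
  simp only [ne_eq, Fin.ext_iff, Fin.val_cast_of_lt h2, Fin.val_zero]
  omega

lemma mAdj_cE_succ' (i j : Fin (m+3)) (h : j = i + 1) :
    (middleGraph (cycleGraph (m+3))).Adj (Sum.inr (cE m i)) (Sum.inr (cE m j)) :=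
  h ▸ mAdj_cE_succ i

lemma reach (t : ℕ) (h1 : 1 ≤ t) (h2 : t < m+3) (hmem) :
    ((middleGraph (cycleGraph (m+3))).induce (S0 m)ᶜ).Reachable
      ⟨Sum.inr (cE m (↑t : Fin (m+3))), hmem⟩ (hub m) := by
  induction t with
  | zero => omega
  | succ t ih =>
    rcases Nat.lt_or_ge t 1 with h | h
    · interval_cases t
      have he : (⟨Sum.inr (cE m ((0+1 : ℕ) : Fin (m+3))), hmem⟩ : ↥(S0 m)ᶜ) = hub m := by
        apply Subtype.ext
        show Sum.inr (cE m (↑(0+1:ℕ) : Fin (m+3))) = Sum.inr (cE m 1)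
        norm_num
      rw [he]
    · have hmem' := cast_mem (m := m) t h (by omega)
      have hadj : ((middleGraph (cycleGraph (m+3))).induce (S0 m)ᶜ).Adj
          ⟨Sum.inr (cE m (↑(t+1) : Fin (m+3))), hmem⟩ ⟨Sum.inr (cE m (↑t : Fin (m+3))), hmem'⟩ := by
        apply ind_adj
        exact (mAdj_cE_succ' (↑t) (↑(t+1)) (by push_cast; ring)).symm
      exact hadj.reachable.trans (ih h (by omega) hmem')

lemma reach_all (u : ↥(S0 m)ᶜ) :
    ((middleGraph (cycleGraph (m+3))).induce (S0 m)ᶜ).Reachable u (hub m) := by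
  obtain ⟨(v | e), hmem⟩ := u
  · rcases mem_S0c_inl.mp hmem with h | h
    · -- v = 0, adjacent to cE (-1)
      have hm1 : (-1 : Fin (m+3)) ≠ 0 := by
        rw [neg_ne_zero]; exact one_ne_zero
      have hmem2 : Sum.inr (cE m (-1 : Fin (m+3))) ∈ (S0 m)ᶜ := mem_S0c_inr.mpr (cE_ne hm1)
      have hadj : ((middleGraph (cycleGraph (m+3))).induce (S0 m)ᶜ).Adj
          ⟨Sum.inl v, hmem⟩ ⟨Sum.inr (cE m (-1 : Fin (m+3))), hmem2⟩ := by
        apply ind_adj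
        rw [mAdj_inl_inr, mem_cE, h]
        right; rw [neg_add_cancel]
      refine hadj.reachable.trans ?_
      have hcast : ((m+2 : ℕ) : Fin (m+3)) = -1 := by
        have h0 : ((m+2 : ℕ) : Fin (m+3)) + 1 = 0 := by
          have : (((m+2) + 1 : ℕ) : Fin (m+3)) = 0 := by
            rw [Fin.natCast_self]
          rw [← this]; push_cast; ring
        exact eq_neg_of_add_eq_zero_left h0
      have hmem3 : Sum.inr (cE m ((m+2 : ℕ) : Fin (m+3))) ∈ (S0 m)ᶜ := by rw [hcast]; exact hmem2
      have := reach (m := m) (m+2) (by omega) (by omega) hmem3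
      have he : (⟨Sum.inr (cE m ((m+2:ℕ) : Fin (m+3))), hmem3⟩ : ↥(S0 m)ᶜ)
          = ⟨Sum.inr (cE m (-1 : Fin (m+3))), hmem2⟩ := by
        apply Subtype.ext
        show Sum.inr (cE m ((m+2:ℕ) : Fin (m+3))) = Sum.inr (cE m (-1 : Fin (m+3)))
        rw [hcast]
      rw [he] at this
      exact this
    · -- v = 1, adjacent to hub
      have hadj : ((middleGraph (cycleGraph (m+3))).induce (S0 m)ᶜ).Adj
          ⟨Sum.inl v, hmem⟩ (hub m) := by
        apply ind_adj
        show (middleGraph (cycleGraph (m+3))).Adj (Sum.inl v) (Sum.inr (cE m 1))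
        rw [mAdj_inl_inr, mem_cE, h]
        left; rfl
      exact hadj.reachable
  · obtain ⟨i, rfl⟩ := cE_surj e
    have hne : i ≠ 0 := fun h => (mem_S0c_inr.mp hmem) (by rw [h])
    have h1 : 1 ≤ i.val := Nat.one_le_iff_ne_zero.mpr (fun h => hne (Fin.ext h))
    have hmem3 : Sum.inr (cE m ((i.val : ℕ) : Fin (m+3))) ∈ (S0 m)ᶜ := by
      rw [Fin.cast_val_eq_self]; exact hmem
    have := reach (m := m) i.val h1 i.isLt hmem3
    have he : (⟨Sum.inr (cE m ((i.val : ℕ) : Fin (m+3))), hmem3⟩ : ↥(S0 m)ᶜ)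
        = ⟨Sum.inr (cE m i), hmem⟩ := by
      apply Subtype.ext
      show Sum.inr (cE m ((i.val : ℕ) : Fin (m+3))) = Sum.inr (cE m i)
      rw [Fin.cast_val_eq_self]
    rw [he] at this
    exact this

lemma S0_conn : ((middleGraph (cycleGraph (m+3))).induce (S0 m)ᶜ).Connected := by
  rw [connected_iff]
  exact ⟨fun u v => (reach_all u).trans (reach_all v).symm, ⟨hub m⟩⟩

lemma S0_ncard : (S0 m).ncard = m + 2 := by
  rw [S0, Set.ncard_union_eq]
  · rw [Set.ncard_image_of_injective _ Sum.inl_injective, Set.ncard_singleton]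
    have hc : ({0, 1} : Set (Fin (m+3))).ncard = 1 + 1 := by
      rw [Set.ncard_insert_of_notMem (by simp [Fin.ext_iff]), Set.ncard_singleton]
    have := Set.ncard_add_ncard_compl ({0, 1} : Set (Fin (m+3)))
    rw [hc, Nat.card_eq_fintype_card, Fintype.card_fin] at this
    omega
  · rw [Set.disjoint_singleton_right]
    rintro ⟨v, -, h⟩
    exact absurd h (by simp)

lemma block_claim (S : Set (Fin (m+3) ⊕ (cycleGraph (m+3)).edgeSet))
    (hconn : ((middleGraph (cycleGraph (m+3))).induce Sᶜ).Connected)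
    {x y : Fin (m+3)}
    (hx : Sum.inr (cE m x) ∉ S) (hx1 : Sum.inr (cE m (x-1)) ∈ S)
    (hy : Sum.inr (cE m y) ∉ S) (hy1 : Sum.inr (cE m (y-1)) ∈ S) : x = y := by
  classical
  have hcast : ((m+2 : ℕ) : Fin (m+3)) = -1 := by
    have h0 : ((m+2 : ℕ) : Fin (m+3)) + 1 = 0 := by
      have h1 : (((m+2) + 1 : ℕ) : Fin (m+3)) = 0 := by rw [Fin.natCast_self]
      rw [← h1]; push_cast; ring
    exact eq_neg_of_add_eq_zero_left h0
  have hP : ∃ t : ℕ, 0 < t ∧ Sum.inr (cE m (x + (↑t : Fin (m+3)))) ∈ S := by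
    refine ⟨m+2, by omega, ?_⟩
    rw [hcast]
    have : x + (-1 : Fin (m+3)) = x - 1 := by ring
    rw [this]; exact hx1
  set d := Nat.find hP with hd_def
  have hd := Nat.find_spec hP
  have hmin : ∀ t, t < d → ¬ (0 < t ∧ Sum.inr (cE m (x + (↑t : Fin (m+3)))) ∈ S) :=
    fun t ht => Nat.find_min hP ht
  -- helper steps
  have hup : ∀ t : ℕ, t < d → ∀ j : Fin (m+3), Sum.inr (cE m j) ∉ S →
      j = x + ↑t + 1 → ∃ t' : ℕ, t' < d ∧ j = x + ↑t' := by
    intro t ht j hj hje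
    rcases eq_or_lt_of_le (Nat.succ_le_of_lt ht) with he | hlt
    · exfalso
      apply hj
      have h2 : j = x + ((↑(t+1) : Fin (m+3))) := by rw [hje]; push_cast; ring
      rw [h2, show t + 1 = Nat.find hP from he]
      exact hd.2
    · exact ⟨t+1, hlt, by rw [hje]; push_cast; ring⟩
  have hdown : ∀ t : ℕ, t < d → ∀ j : Fin (m+3), Sum.inr (cE m j) ∉ S →
      j = x + ↑t - 1 → ∃ t' : ℕ, t' < d ∧ j = x + ↑t' := by
    intro t ht j hj hje
    rcases Nat.eq_zero_or_pos t with rfl | hpos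
    · exfalso
      apply hj
      have h2 : j = x - 1 := by rw [hje]; push_cast; ring
      rw [h2]; exact hx1
    · refine ⟨t-1, by omega, ?_⟩
      rw [hje, Nat.cast_sub hpos, Nat.cast_one]
      ring
  -- invariant
  let Q : (Fin (m+3) ⊕ (cycleGraph (m+3)).edgeSet) → Prop := fun w =>
    match w with
    | Sum.inl v => ∃ t : ℕ, t < d ∧ (v = x + ↑t ∨ v = x + ↑t + 1)
    | Sum.inr e => ∃ t : ℕ, t < d ∧ e = cE m (x + ↑t)
  have step : ∀ u v : ↥Sᶜ, ((middleGraph (cycleGraph (m+3))).induce Sᶜ).Adj u v →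
      Q u.val → Q v.val := by
    rintro ⟨(a | e), hu⟩ ⟨(b | f), hv⟩ hadj hq
    · exact absurd (ind_adj' hadj) mAdj_inl_inl
    · -- inl a → inr f
      obtain ⟨j, rfl⟩ := cE_surj f
      have hjS : Sum.inr (cE m j) ∉ S := hv
      have hmem := mAdj_inl_inr.mp (ind_adj' hadj)
      rw [mem_cE] at hmem
      obtain ⟨t, ht, hva⟩ := hq
      have : ∃ t' : ℕ, t' < d ∧ j = x + ↑t' := by
        rcases hva with hva | hva <;> rcases hmem with hmem | hmem
        · exact ⟨t, ht, by rw [← hmem, hva]⟩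
        · exact hdown t ht j hjS (by rw [eq_sub_of_add_eq hmem.symm, hva])
        · exact hup t ht j hjS (by rw [← hmem, hva])
        · exact ⟨t, ht, add_right_cancel (hmem ▸ hva : j + 1 = x + ↑t + 1)⟩
      obtain ⟨t', ht', hj⟩ := this
      exact ⟨t', ht', by rw [hj]⟩
    · -- inr e → inl b
      obtain ⟨t, ht, rfl⟩ := hq
      have hmem := mAdj_inr_inl.mp (ind_adj' hadj)
      rw [mem_cE] at hmem
      exact ⟨t, ht, hmem⟩
    · -- inr e → inr f
      obtain ⟨t, ht, rfl⟩ := hq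
      obtain ⟨j, rfl⟩ := cE_surj f
      have hjS : Sum.inr (cE m j) ∉ S := hv
      obtain ⟨-, w, hw1, hw2⟩ := mAdj_inr_inr.mp (ind_adj' hadj)
      rw [mem_cE] at hw1 hw2
      have : ∃ t' : ℕ, t' < d ∧ j = x + ↑t' := by
        rcases hw1 with hw1 | hw1 <;> rcases hw2 with hw2 | hw2
        · exact ⟨t, ht, by rw [← hw2, hw1]⟩
        · exact hdown t ht j hjS (by rw [eq_sub_of_add_eq hw2.symm, hw1])
        · exact hup t ht j hjS (by rw [← hw2, hw1])
        · exact ⟨t, ht, add_right_cancel ((hw2.symm.trans hw1) : j + 1 = x + ↑t + 1)⟩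
      obtain ⟨t', ht', hj⟩ := this
      exact ⟨t', ht', by rw [hj]⟩
  have hwalk : ∀ (u v : ↥Sᶜ) (_ : ((middleGraph (cycleGraph (m+3))).induce Sᶜ).Walk u v),
      Q u.val → Q v.val := by
    intro u v p
    induction p with
    | nil => exact id
    | cons h p ih => exact fun hq => ih (step _ _ h hq)
  have hdpos : 0 < d := hd.1
  obtain ⟨p⟩ := hconn.preconnected ⟨Sum.inr (cE m x), hx⟩ ⟨Sum.inr (cE m y), hy⟩
  have hQy := hwalk _ _ p ⟨0, hdpos, by norm_num⟩
  obtain ⟨t, ht, hey⟩ := hQy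
  have hyx : y = x + (↑t : Fin (m+3)) := cE_inj hey
  rcases Nat.eq_zero_or_pos t with rfl | hpos
  · rw [hyx]; norm_num
  · exfalso
    have h1 : y - 1 = x + ((↑(t-1) : ℕ) : Fin (m+3)) := by
      rw [hyx, Nat.cast_sub hpos, Nat.cast_one]; ring
    rcases Nat.eq_zero_or_pos (t-1) with h0 | hpos2
    · apply hx
      have h2 : y - 1 = x := by rw [h1, h0]; norm_num
      rw [h2] at hy1
      exact hy1
    · exact hmin (t-1) (by omega) ⟨hpos2, by rw [← h1]; exact hy1⟩

lemma lower_bound (S : Set (Fin (m+3) ⊕ (cycleGraph (m+3)).edgeSet))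
    (hdom : IsDomSet (middleGraph (cycleGraph (m+3))) S)
    (hconn : ((middleGraph (cycleGraph (m+3))).induce Sᶜ).Connected) :
    m + 2 ≤ S.ncard := by
  classical
  set A : Set (Fin (m+3)) := {v | Sum.inl v ∈ S} with hA
  set B : Set (Fin (m+3)) := {i | Sum.inr (cE m i) ∈ S} with hB
  have hS : S = Sum.inl '' A ∪ (fun i => Sum.inr (cE m i)) '' B := by
    ext (v | e)
    · constructor
      · intro h
        exact Or.inl ⟨v, h, rfl⟩
      · rintro (⟨w, hw, hwe⟩ | ⟨i, hi, hie⟩)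
        · rwa [← Sum.inl_injective hwe]
        · exact absurd hie (by simp)
    · constructor
      · intro h
        obtain ⟨i, rfl⟩ := cE_surj e
        exact Or.inr ⟨i, h, rfl⟩
      · rintro (⟨w, hw, hwe⟩ | ⟨i, hi, hie⟩)
        · exact absurd hwe (by simp)
        · have : cE m i = e := Sum.inr_injective hie
          rwa [← this]
  have hinj : Function.Injective (fun i => (Sum.inr (cE m i) : Fin (m+3) ⊕ (cycleGraph (m+3)).edgeSet)) :=
    fun i j h => cE_inj (Sum.inr_injective h)
  have hcard : S.ncard = A.ncard + B.ncard := by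
    rw [hS, Set.ncard_union_eq, Set.ncard_image_of_injective _ Sum.inl_injective,
      Set.ncard_image_of_injective _ hinj]
    rw [Set.disjoint_iff_forall_ne]
    rintro a ⟨w, -, rfl⟩ b ⟨i, -, rfl⟩
    simp
  have hdomv : ∀ v : Fin (m+3), v ∈ A ∨ v ∈ B ∨ v - 1 ∈ B := by
    intro v
    obtain ⟨u, hu, he⟩ := hdom (Sum.inl v)
    rcases he with rfl | hadj
    · exact Or.inl hu
    · match u with
      | Sum.inl w => exact absurd hadj mAdj_inl_inl
      | Sum.inr e =>
        obtain ⟨i, rfl⟩ := cE_surj e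
        have hmem := mAdj_inr_inl.mp hadj
        rw [mem_cE] at hmem
        rcases hmem with rfl | rfl
        · exact Or.inr (Or.inl hu)
        · right; right
          have : i + 1 - 1 = i := by ring
          rw [this]
          exact hu
  set L : Set (Fin (m+3)) := {v | v ∉ B ∧ v - 1 ∈ B} with hL
  have hAc : Aᶜ ⊆ B ∪ L := by
    intro v hv
    rcases hdomv v with h | h | h
    · exact absurd h hv
    · exact Or.inl h
    · by_cases hvB : v ∈ B
      · exact Or.inl hvB
      · exact Or.inr ⟨hvB, h⟩
  have hLsub : L.Subsingleton := by
    rintro a ⟨haB, haB1⟩ b ⟨hbB, hbB1⟩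
    exact block_claim S hconn haB haB1 hbB hbB1
  have hL1 : L.ncard ≤ 1 := by
    rcases hLsub.eq_empty_or_singleton with h | ⟨a, h⟩
    · rw [h]; simp
    · rw [h]; simp
  have hAcard : A.ncard + Aᶜ.ncard = m + 3 := by
    rw [Set.ncard_add_ncard_compl, Nat.card_eq_fintype_card, Fintype.card_fin]
  have hAc_le : Aᶜ.ncard ≤ B.ncard + 1 := by
    calc Aᶜ.ncard ≤ (B ∪ L).ncard := Set.ncard_le_ncard hAc (Set.toFinite _)
    _ ≤ B.ncard + L.ncard := Set.ncard_union_le _ _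
    _ ≤ B.ncard + 1 := by omega
  omega


theorem stmt7 (n : ℕ) (h3 : 3 ≤ n) :
    outConnDomNum (middleGraph (SimpleGraph.cycleGraph n)) = n - 1 := by
  obtain ⟨m, rfl⟩ : ∃ m, n = m + 3 := ⟨n - 3, by omega⟩
  have hmem : (m + 2) ∈ {k | ∃ S : Set (Fin (m+3) ⊕ (SimpleGraph.cycleGraph (m+3)).edgeSet),
      IsDomSet (middleGraph (SimpleGraph.cycleGraph (m+3))) S ∧
      ((middleGraph (SimpleGraph.cycleGraph (m+3))).induce Sᶜ).Connected ∧ S.ncard = k} :=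
    ⟨S0 m, S0_dom, S0_conn, S0_ncard⟩
  have h1 : outConnDomNum (middleGraph (SimpleGraph.cycleGraph (m+3))) ≤ m + 2 :=
    Nat.sInf_le hmem
  have h2 : m + 2 ≤ outConnDomNum (middleGraph (SimpleGraph.cycleGraph (m+3))) :=
    le_csInf ⟨m + 2, hmem⟩ (by rintro k ⟨S, hdom, hconn, rfl⟩; exact lower_bound S hdom hconn)
  have h4 : outConnDomNum (middleGraph (SimpleGraph.cycleGraph (m+3))) = m + 2 := le_antisymm h1 h2
  rw [h4]
  omega

end Scratch
end

section
/- For any wheel graph W_n of order n ≥ 4 (a hub joined to a cycle on n − 1 vertices), the outer-connected domination number of the middle graph satisfies γ̃_c(M(W_n)) = ⌈n/2⌉. -/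
open SimpleGraph

section Aux
attribute [local instance] Classical.propDecidable
variable {m : ℕ}

lemma zcast_inj {a b : ℕ} (ha : a < m) (hb : b < m)
    (h : (a : ZMod m) = b) : a = b := by
  rw [ZMod.natCast_eq_natCast_iff'] at h
  rwa [Nat.mod_eq_of_lt ha, Nat.mod_eq_of_lt hb] at h

lemma ztwo_ne (hm : 3 ≤ m) : (2 : ZMod m) ≠ 0 := by
  intro h
  have h2 : ((2 : ℕ) : ZMod m) = 0 := by push_cast; exact h
  rw [ZMod.natCast_eq_zero_iff] at h2
  exact absurd (Nat.le_of_dvd (by norm_num) h2) (by omega)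

lemma zone_ne (hm : 3 ≤ m) : (1 : ZMod m) ≠ 0 := by
  intro h
  have h2 : ((1 : ℕ) : ZMod m) = 0 := by push_cast; exact h
  rw [ZMod.natCast_eq_zero_iff] at h2
  exact absurd (Nat.le_of_dvd (by norm_num) h2) (by omega)

def spokeE (m : ℕ) (j : ZMod m) : (wheelGraph m).edgeSet :=
  ⟨s(none, some j), by rw [SimpleGraph.mem_edgeSet]; trivial⟩

def cycE (hm : 3 ≤ m) (i : ℕ) : (wheelGraph m).edgeSet :=
  ⟨s(some ((2*i+1 : ℕ) : ZMod m), some ((2*i+2 : ℕ) : ZMod m)), by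
    rw [SimpleGraph.mem_edgeSet]
    refine ⟨fun h => zone_ne hm ?_, Or.inr ?_⟩
    · push_cast at h; linear_combination -h
    · push_cast; ring⟩

noncomputable def domF (hm : 3 ≤ m) :
    Finset (Option (ZMod m) ⊕ (wheelGraph m).edgeSet) :=
  insert (Sum.inr (spokeE m 0)) ((Finset.range (m/2)).image fun i => Sum.inr (cycE hm i))

lemma inl_not_mem_domF (hm : 3 ≤ m) (w : Option (ZMod m)) :
    Sum.inl w ∉ domF hm := by
  simp [domF]

lemma inr_mem_domF (hm : 3 ≤ m) (f : (wheelGraph m).edgeSet) :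
    Sum.inr f ∈ domF hm ↔ (f : Sym2 (Option (ZMod m))) = s(none, some 0) ∨
      ∃ i < m/2, (f : Sym2 (Option (ZMod m))) =
        s(some ((2*i+1 : ℕ) : ZMod m), some ((2*i+2 : ℕ) : ZMod m)) := by
  simp only [domF, Finset.mem_insert, Finset.mem_image, Finset.mem_range,
    Sum.inr.injEq, Subtype.ext_iff, spokeE, cycE]
  constructor
  · rintro (h | ⟨i, hi, h⟩)
    · exact Or.inl h
    · exact Or.inr ⟨i, hi, h.symm⟩
  · rintro (h | ⟨i, hi, h⟩)
    · exact Or.inl h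
    · exact Or.inr ⟨i, hi, h.symm⟩

lemma card_domF (hm : 3 ≤ m) : (domF hm).card = m / 2 + 1 := by
  rw [domF, Finset.card_insert_of_notMem, Finset.card_image_of_injOn,
    Finset.card_range]
  · intro i hi j hj hij
    rw [Finset.mem_coe, Finset.mem_range] at hi hj
    simp only [Sum.inr.injEq, Subtype.ext_iff, cycE, Sym2.eq_iff, Option.some.injEq] at hij
    rcases hij with ⟨h1, _⟩ | ⟨h1, h2⟩
    · have := zcast_inj (a := 2*i+1) (b := 2*j+1) (by omega) (by omega) h1
      omega
    · exfalso
      apply ztwo_ne hm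
      push_cast at h1 h2
      linear_combination h2 - h1
  · simp [Sum.inr.injEq, Subtype.ext_iff, cycE, spokeE, Sym2.eq_iff]

end Aux

section Aux2
attribute [local instance] Classical.propDecidable
variable {m : ℕ}

lemma cover (hm : 3 ≤ m) (w : Option (ZMod m)) :
    ∃ e, Sum.inr e ∈ domF hm ∧ w ∈ (e : Sym2 (Option (ZMod m))) := by
  haveI : NeZero m := ⟨by omega⟩
  match w with
  | none =>
    refine ⟨spokeE m 0, ?_, ?_⟩
    · rw [inr_mem_domF]; exact Or.inl rfl
    · exact Sym2.mem_mk_left _ _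
  | some j =>
    have hjv : j.val < m := ZMod.val_lt j
    have hj : ((j.val : ℕ) : ZMod m) = j := ZMod.natCast_zmod_val j
    by_cases h0 : j.val = 0
    · have : j = 0 := by rwa [ZMod.val_eq_zero] at h0
      subst this
      refine ⟨spokeE m 0, ?_, ?_⟩
      · rw [inr_mem_domF]; exact Or.inl rfl
      · exact Sym2.mem_mk_right _ _
    · rcases Nat.even_or_odd j.val with ⟨i, hi⟩ | ⟨i, hi⟩
      · -- j.val = 2*(i-1)+2 with i ≥ 1
        refine ⟨cycE hm (i-1), ?_, ?_⟩
        · rw [inr_mem_domF]; exact Or.inr ⟨i-1, by omega, rfl⟩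
        · have : ((2*(i-1)+2 : ℕ) : ZMod m) = j := by rw [← hj]; congr 1; omega
          rw [cycE]
          simp only [this]
          exact Sym2.mem_mk_right _ _
      · refine ⟨cycE hm i, ?_, ?_⟩
        · rw [inr_mem_domF]; exact Or.inr ⟨i, by omega, rfl⟩
        · have : ((2*i+1 : ℕ) : ZMod m) = j := by rw [← hj]; congr 1; omega
          rw [cycE]
          simp only [this]
          exact Sym2.mem_mk_left _ _

lemma domF_dom (hm : 3 ≤ m) :
    IsDomSet (middleGraph (wheelGraph m)) ↑(domF hm) := by
  rintro (w | f)
  · obtain ⟨e, he, hw⟩ := cover hm w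
    exact ⟨Sum.inr e, he, Or.inr hw⟩
  · by_cases hf : Sum.inr f ∈ domF hm
    · exact ⟨Sum.inr f, hf, Or.inl rfl⟩
    · obtain ⟨q, hq⟩ := f
      obtain ⟨⟨a, b⟩, rfl⟩ := q.exists_rep
      obtain ⟨e, he, ha⟩ := cover hm a
      refine ⟨Sum.inr e, he, Or.inr ⟨?_, a, ha, Sym2.mem_mk_left _ _⟩⟩
      intro hef
      exact hf (hef ▸ he)

end Aux2

section Aux3
attribute [local instance] Classical.propDecidable
variable {m : ℕ}

lemma cyc_lt (hm : 3 ≤ m) {i : ℕ} (hi : i < m / 2) : 2*i+1 < m := by omega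

lemma spoke_not_mem (hm : 3 ≤ m) {j : ZMod m} (hj : j ≠ 0) :
    Sum.inr (spokeE m j) ∉ domF hm := by
  rw [inr_mem_domF]
  push_neg
  refine ⟨?_, fun i _ => ?_⟩
  · intro h
    have h' : s(Option.none, some j) = s(Option.none, some 0) := h
    rw [Sym2.eq_iff] at h'
    rcases h' with ⟨-, h'⟩ | ⟨h', -⟩
    · exact hj (Option.some.inj h')
    · exact nomatch h'
  · intro h
    have h' : s(Option.none, some j) =
        s(some ((2*i+1 : ℕ) : ZMod m), some ((2*i+2 : ℕ) : ZMod m)) := h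
    rw [Sym2.eq_iff] at h'
    rcases h' with ⟨h', -⟩ | ⟨h', -⟩ <;> exact nomatch h'

lemma e01_adj (hm : 3 ≤ m) : (wheelGraph m).Adj (some 0) (some 1) :=
  ⟨fun h => zone_ne hm h.symm, Or.inr (sub_zero 1)⟩

lemma e01_not_mem (hm : 3 ≤ m) :
    Sum.inr (⟨s(some 0, some 1), e01_adj hm⟩ : (wheelGraph m).edgeSet) ∉ domF hm := by
  rw [inr_mem_domF]
  push_neg
  refine ⟨?_, fun i hi => ?_⟩
  · intro h
    have h' : s(some (0 : ZMod m), some 1) = s(Option.none, some 0) := h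
    rw [Sym2.eq_iff] at h'
    rcases h' with ⟨h', -⟩ | ⟨-, h'⟩ <;> exact nomatch h'
  · intro h
    have h' : s(some (0 : ZMod m), some 1) =
        s(some ((2*i+1 : ℕ) : ZMod m), some ((2*i+2 : ℕ) : ZMod m)) := h
    rw [Sym2.eq_iff] at h'
    rcases h' with ⟨h1, h2⟩ | ⟨h1, h2⟩
    · have h1' : ((0:ℕ) : ZMod m) = ((2*i+1 : ℕ) : ZMod m) := by
        rw [Nat.cast_zero]; exact Option.some.inj h1
      have := zcast_inj (by omega) (cyc_lt hm hi) h1'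
      omega
    · have h2' : ((1:ℕ) : ZMod m) = ((2*i+1 : ℕ) : ZMod m) := by
        rw [Nat.cast_one]; exact Option.some.inj h2
      have := zcast_inj (by omega) (cyc_lt hm hi) h2'
      have hi0 : i = 0 := by omega
      subst hi0
      apply ztwo_ne hm
      have h1'' : (0 : ZMod m) = ((2*0+2 : ℕ) : ZMod m) := Option.some.inj h1
      push_cast at h1''
      linear_combination -h1''

lemma domF_conn (hm : 3 ≤ m) :
    ((middleGraph (wheelGraph m)).induce (↑(domF hm) : Set _)ᶜ).Connected := by
  set S : Set (Option (ZMod m) ⊕ (wheelGraph m).edgeSet) := ↑(domF hm) with hS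
  set H := (middleGraph (wheelGraph m)).induce Sᶜ with hH
  have hhub : (Sum.inl none : Option (ZMod m) ⊕ (wheelGraph m).edgeSet) ∈ Sᶜ :=
    inl_not_mem_domF hm none
  have adjH : ∀ {x y : Option (ZMod m) ⊕ (wheelGraph m).edgeSet}
      (hx : x ∈ Sᶜ) (hy : y ∈ Sᶜ), (middleGraph (wheelGraph m)).Adj x y →
      H.Adj ⟨x, hx⟩ ⟨y, hy⟩ := fun _ _ h => h
  have hspoke : ∀ j : ZMod m, j ≠ 0 → Sum.inr (spokeE m j) ∈ Sᶜ :=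
    fun j hj => spoke_not_mem hm hj
  have reach_spoke : ∀ (j : ZMod m) (hj : j ≠ 0),
      H.Reachable ⟨Sum.inr (spokeE m j), hspoke j hj⟩ ⟨Sum.inl none, hhub⟩ := by
    intro j hj
    exact (adjH _ _ (Sym2.mem_mk_left _ _)).reachable
  have key : ∀ (x : Option (ZMod m) ⊕ (wheelGraph m).edgeSet) (hx : x ∈ Sᶜ),
      H.Reachable ⟨x, hx⟩ ⟨Sum.inl none, hhub⟩ := by
    rintro ((_ | j) | f) hx
    · exact Reachable.refl _
    · by_cases hj : j = 0
      · subst hj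
        have h1 : (1 : ZMod m) ≠ 0 := zone_ne hm
        have he01 : Sum.inr (⟨s(some 0, some 1), e01_adj hm⟩ : (wheelGraph m).edgeSet) ∈ Sᶜ :=
          e01_not_mem hm
        refine ((adjH hx he01 ?_).reachable).trans
          (((adjH he01 (hspoke 1 h1) ?_).reachable).trans (reach_spoke 1 h1))
        · exact Sym2.mem_mk_left _ _
        · refine ⟨?_, some 1, Sym2.mem_mk_right _ _, Sym2.mem_mk_right _ _⟩
          intro hcontra
          have h' : s(some (0 : ZMod m), some 1) = s(Option.none, some 1) :=
            congrArg Subtype.val hcontra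
          rw [Sym2.eq_iff] at h'
          rcases h' with ⟨h', -⟩ | ⟨-, h'⟩ <;> exact nomatch h'
      · exact ((adjH hx (hspoke j hj) (Sym2.mem_mk_right _ _)).reachable).trans
          (reach_spoke j hj)
    · obtain ⟨q, hq⟩ := f
      obtain ⟨⟨a, b⟩, rfl⟩ := q.exists_rep
      match a, b, hq, hx with
      | none, none, hq, hx => exact absurd (show False from hq) id
      | none, some j, hq, hx =>
        exact (adjH hx hhub (Sym2.mem_mk_left _ _)).reachable
      | some j, none, hq, hx =>
        exact (adjH hx hhub (Sym2.mem_mk_right _ _)).reachable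
      | some p, some q', hq, hx =>
        have hpq : (wheelGraph m).Adj (some p) (some q') := hq
        by_cases hp : p = 0
        · have hq0 : q' ≠ 0 := fun h => hpq.1 (by rw [hp, h])
          refine ((adjH hx (hspoke q' hq0) ?_).reachable).trans (reach_spoke q' hq0)
          refine ⟨?_, some q', Sym2.mem_mk_right _ _, Sym2.mem_mk_right _ _⟩
          intro hcontra
          have h' : s(some p, some q') = s(Option.none, some q') :=
            congrArg Subtype.val hcontra
          rw [Sym2.eq_iff] at h'
          rcases h' with ⟨h', -⟩ | ⟨-, h'⟩ <;> exact nomatch h'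
        · refine ((adjH hx (hspoke p hp) ?_).reachable).trans (reach_spoke p hp)
          refine ⟨?_, some p, Sym2.mem_mk_left _ _, Sym2.mem_mk_right _ _⟩
          intro hcontra
          have h' : s(some p, some q') = s(Option.none, some p) :=
            congrArg Subtype.val hcontra
          rw [Sym2.eq_iff] at h'
          rcases h' with ⟨h', -⟩ | ⟨-, h'⟩ <;> exact nomatch h'
  rw [connected_iff]
  refine ⟨fun x y => ?_, ⟨⟨Sum.inl none, hhub⟩⟩⟩
  obtain ⟨x, hx⟩ := x
  obtain ⟨y, hy⟩ := y
  exact (key x hx).trans (key y hy).symm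

end Aux3

section Aux4
attribute [local instance] Classical.propDecidable

lemma middle_dom_lower {V : Type*} [Fintype V] (G : SimpleGraph V)
    (S : Set (V ⊕ G.edgeSet)) (hS : IsDomSet (middleGraph G) S) :
    Fintype.card V ≤ 2 * S.ncard := by
  classical
  choose d hd1 hd2 using fun v => hS (Sum.inl v)
  have hfin : S.Finite := Set.toFinite S
  have hsub : Finset.univ.image d ⊆ hfin.toFinset := by
    intro x hx
    rw [Finset.mem_image] at hx
    obtain ⟨v, -, rfl⟩ := hx
    exact hfin.mem_toFinset.mpr (hd1 v)
  have h2 : ∀ b ∈ Finset.univ.image d,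
      (Finset.univ.filter fun v => d v = b).card ≤ 2 := by
    rintro (w | e) _
    · refine le_trans (Finset.card_le_card (t := {w}) ?_) (by simp)
      intro v hv
      rw [Finset.mem_filter] at hv
      rcases hd2 v with h | h
      · rw [hv.2] at h
        rw [Finset.mem_singleton]
        exact (Sum.inl.inj h).symm
      · rw [hv.2] at h
        exact absurd (show False from h) id
    · obtain ⟨q, hq⟩ := e
      obtain ⟨⟨a, b⟩, rfl⟩ := q.exists_rep
      refine le_trans (Finset.card_le_card (t := {a, b}) ?_) ?_
      · intro v hv
        rw [Finset.mem_filter] at hv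
        rcases hd2 v with h | h
        · rw [hv.2] at h
          exact nomatch h
        · rw [hv.2] at h
          have h' : v ∈ s(a, b) := h
          rw [Sym2.mem_iff] at h'
          simp [h']
      · exact le_trans (Finset.card_insert_le _ _) (by simp)
  have hmain := Finset.card_le_mul_card_image (s := (Finset.univ : Finset V)) (f := d) 2 h2
  calc Fintype.card V = (Finset.univ : Finset V).card := Finset.card_univ.symm
    _ ≤ 2 * (Finset.univ.image d).card := hmain
    _ ≤ 2 * hfin.toFinset.card := by
        exact Nat.mul_le_mul_left 2 (Finset.card_le_card hsub)
    _ = 2 * S.ncard := by rw [Set.ncard_eq_toFinset_card S hfin]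

end Aux4

theorem stmt8 (n : ℕ) (h4 : 4 ≤ n) :
    outConnDomNum (middleGraph (wheelGraph (n - 1))) = (n + 1) / 2 := by
  have hm : 3 ≤ n - 1 := by omega
  haveI : NeZero (n - 1) := ⟨by omega⟩
  have hmem : (n-1)/2 + 1 ∈ {k | ∃ S : Set (Option (ZMod (n-1)) ⊕ (wheelGraph (n-1)).edgeSet),
      IsDomSet (middleGraph (wheelGraph (n-1))) S ∧
      ((middleGraph (wheelGraph (n-1))).induce Sᶜ).Connected ∧ S.ncard = (n-1)/2 + 1} :=
    ⟨↑(domF hm), domF_dom hm, domF_conn hm, by rw [Set.ncard_coe_finset, card_domF]⟩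
  have hub : outConnDomNum (middleGraph (wheelGraph (n-1))) ≤ (n-1)/2 + 1 := by
    unfold outConnDomNum
    exact Nat.sInf_le ⟨↑(domF hm), domF_dom hm, domF_conn hm,
      by rw [Set.ncard_coe_finset, card_domF]⟩
  have hlb : (n-1)/2 + 1 ≤ outConnDomNum (middleGraph (wheelGraph (n-1))) := by
    unfold outConnDomNum
    apply le_csInf
    · exact ⟨_, ↑(domF hm), domF_dom hm, domF_conn hm,
        by rw [Set.ncard_coe_finset, card_domF]⟩
    · rintro k ⟨S, hdom, -, rfl⟩
      have hlow := middle_dom_lower (wheelGraph (n-1)) S hdom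
      rw [Fintype.card_option, ZMod.card] at hlow
      omega
  have heq : outConnDomNum (middleGraph (wheelGraph (n-1))) = (n-1)/2 + 1 :=
    le_antisymm hub hlb
  rw [heq]
  omega
end

section
/- For the friendship graph F_n with n ≥ 2 (n triangles sharing a common vertex), the outer-connected domination number of the middle graph satisfies γ̃_c(M(F_n)) = n + 1. -/
open SimpleGraph

namespace Stmt10Aux

variable {n : ℕ}

abbrev V (n : ℕ) := Option (Fin n × Fin 2)
abbrev FG (n : ℕ) := friendshipGraph n
abbrev M (n : ℕ) := middleGraph (friendshipGraph n)

def spokeE (n : ℕ) (i : Fin n) (a : Fin 2) : Sym2 (V n) := s(none, some (i, a))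
def outerE (n : ℕ) (i : Fin n) : Sym2 (V n) := s(some (i, 0), some (i, 1))

lemma spoke_mem (i : Fin n) (a : Fin 2) : spokeE n i a ∈ (FG n).edgeSet := by
  rw [spokeE, SimpleGraph.mem_edgeSet]; exact trivial

lemma outer_mem (i : Fin n) : outerE n i ∈ (FG n).edgeSet := by
  rw [outerE, SimpleGraph.mem_edgeSet]; exact ⟨rfl, by decide⟩

lemma spoke_ne_outer (i j : Fin n) (a : Fin 2) : spokeE n i a ≠ outerE n j := by
  simp [spokeE, outerE, Sym2.eq_iff]

lemma spoke_inj {i j : Fin n} {a b : Fin 2} (h : spokeE n i a = spokeE n j b) :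
    i = j ∧ a = b := by
  simpa [spokeE, Sym2.eq_iff, Prod.ext_iff] using h

lemma outer_inj {i j : Fin n} (h : outerE n i = outerE n j) : i = j := by
  simpa [outerE, Sym2.eq_iff, Prod.ext_iff] using h

lemma edge_cases (e : Sym2 (V n)) (he : e ∈ (FG n).edgeSet) :
    (∃ i a, e = spokeE n i a) ∨ ∃ i, e = outerE n i := by
  induction e using Sym2.ind with
  | _ x y =>
    rw [SimpleGraph.mem_edgeSet] at he
    match x, y, he with
    | none, some (i, a), _ => exact Or.inl ⟨i, a, rfl⟩
    | some (i, a), none, _ => exact Or.inl ⟨i, a, Sym2.eq_swap⟩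
    | some (i, a), some (j, b), he =>
      obtain ⟨rfl, hab⟩ := he
      right
      refine ⟨i, ?_⟩
      fin_cases a <;> fin_cases b <;>
        first | exact absurd rfl hab | exact rfl | exact Sym2.eq_swap

/-- The witness outer-connected dominating set. -/
def outS (n : ℕ) : Set (V n ⊕ (FG n).edgeSet) :=
  insert (Sum.inl none)
    (Set.range fun i : Fin n => Sum.inr ⟨outerE n i, outer_mem i⟩)

lemma outer_fun_inj :
    Function.Injective
      (fun i : Fin n => (Sum.inr ⟨outerE n i, outer_mem i⟩ : V n ⊕ (FG n).edgeSet)) := by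
  intro i j h
  simp only [Sum.inr.injEq, Subtype.mk.injEq] at h
  exact outer_inj h

lemma outS_ncard : (outS n).ncard = n + 1 := by
  rw [outS, Set.ncard_insert_of_notMem (by simp) (Set.toFinite _)]
  have : (Set.range fun i : Fin n =>
      (Sum.inr ⟨outerE n i, outer_mem i⟩ : V n ⊕ (FG n).edgeSet)).ncard = n := by
    rw [Set.ncard_eq_toFinset_card', Set.toFinset_range]
    rw [Finset.card_image_of_injective _ outer_fun_inj]
    simp
  rw [this]

lemma outS_dom : IsDomSet (M n) (outS n) := by
  rintro (x | e)
  · match x with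
    | none => exact ⟨Sum.inl none, Or.inl rfl, Or.inl rfl⟩
    | some (i, a) =>
      refine ⟨Sum.inr ⟨outerE n i, outer_mem i⟩, Or.inr ⟨i, rfl⟩, Or.inr ?_⟩
      show some (i, a) ∈ outerE n i
      fin_cases a
      · exact Sym2.mem_mk_left _ _
      · exact Sym2.mem_mk_right _ _
  · obtain ⟨ev, he⟩ := e
    rcases edge_cases ev he with ⟨i, a, rfl⟩ | ⟨i, rfl⟩
    · refine ⟨Sum.inl none, Or.inl rfl, Or.inr ?_⟩
      show (none : V n) ∈ spokeE n i a
      exact Sym2.mem_mk_left _ _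
    · exact ⟨Sum.inr ⟨outerE n i, outer_mem i⟩, Or.inr ⟨i, rfl⟩, Or.inl rfl⟩

lemma spoke_mem_compl (i : Fin n) (a : Fin 2) :
    (Sum.inr ⟨spokeE n i a, spoke_mem i a⟩ : V n ⊕ (FG n).edgeSet) ∈ (outS n)ᶜ := by
  intro h
  rcases h with h | ⟨j, hj⟩
  · exact absurd h (by simp)
  · simp only [Sum.inr.injEq, Subtype.mk.injEq] at hj
    exact spoke_ne_outer i j a hj.symm

lemma vert_mem_compl (x : Fin n × Fin 2) :
    (Sum.inl (some x) : V n ⊕ (FG n).edgeSet) ∈ (outS n)ᶜ := by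
  intro h
  rcases h with h | ⟨j, hj⟩
  · simp at h
  · simp at hj

lemma outS_compl_connected (hn : 1 ≤ n) : ((M n).induce (outS n)ᶜ).Connected := by
  have i0 : Fin n := ⟨0, hn⟩
  set hub : ↥(outS n)ᶜ :=
    ⟨Sum.inr ⟨spokeE n i0 0, spoke_mem i0 0⟩, spoke_mem_compl i0 0⟩ with hhub
  have reach_spoke : ∀ (i : Fin n) (a : Fin 2),
      ((M n).induce (outS n)ᶜ).Reachable hub
        ⟨Sum.inr ⟨spokeE n i a, spoke_mem i a⟩, spoke_mem_compl i a⟩ := by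
    intro i a
    by_cases h : spokeE n i a = spokeE n i0 0
    · have : (⟨Sum.inr ⟨spokeE n i a, spoke_mem i a⟩, spoke_mem_compl i a⟩ : ↥(outS n)ᶜ)
          = hub := by
        apply Subtype.ext
        simp only [hhub]
        congr 1
        exact Subtype.ext h
      rw [this]
    · apply SimpleGraph.Adj.reachable
      show (M n).Adj (Sum.inr ⟨spokeE n i0 0, spoke_mem i0 0⟩)
        (Sum.inr ⟨spokeE n i a, spoke_mem i a⟩)
      refine ⟨fun hef => h (congrArg Subtype.val hef).symm, none, ?_, ?_⟩
      · exact Sym2.mem_mk_left _ _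
      · exact Sym2.mem_mk_left _ _
  have reach_all : ∀ w : ↥(outS n)ᶜ, ((M n).induce (outS n)ᶜ).Reachable hub w := by
    rintro ⟨x | ⟨ev, he⟩, hw⟩
    · match x with
      | none => exact absurd (Or.inl rfl) hw
      | some (i, a) =>
          refine (reach_spoke i a).trans (SimpleGraph.Adj.reachable ?_)
          show (M n).Adj (Sum.inr ⟨spokeE n i a, spoke_mem i a⟩) (Sum.inl (some (i, a)))
          exact Sym2.mem_mk_right _ _
    · rcases edge_cases ev he with ⟨i, a, rfl⟩ | ⟨i, rfl⟩
      · exact reach_spoke i a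
      · exact absurd (Or.inr ⟨i, rfl⟩) hw
  rw [SimpleGraph.connected_iff]
  exact ⟨fun u v => (reach_all u).symm.trans (reach_all v), ⟨hub⟩⟩

/-- symmetric combination on `Option (Fin n)` -/
def comb : Option (Fin n) → Option (Fin n) → Option (Fin n)
  | none, y => y
  | some i, none => some i
  | some i, some j => some (max i j)

lemma comb_comm (x y : Option (Fin n)) : comb x y = comb y x := by
  cases x <;> cases y <;> simp [comb, max_comm]

def gV : V n → Option (Fin n) := fun x => x.map Prod.fst

noncomputable def idx : (V n ⊕ (FG n).edgeSet) → Option (Fin n)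
  | Sum.inl x => gV x
  | Sum.inr e => Sym2.lift ⟨fun x y => comb (gV x) (gV y),
      fun _ _ => comb_comm _ _⟩ e.val

lemma idx_spoke (i : Fin n) (a : Fin 2) (he : spokeE n i a ∈ (FG n).edgeSet) :
    idx (Sum.inr ⟨spokeE n i a, he⟩) = some i := by
  show Sym2.lift _ (spokeE n i a) = some i
  rw [spokeE, Sym2.lift_mk]
  rfl

lemma idx_outer (i : Fin n) (he : outerE n i ∈ (FG n).edgeSet) :
    idx (Sum.inr ⟨outerE n i, he⟩) = some i := by
  show Sym2.lift _ (outerE n i) = some i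
  rw [outerE, Sym2.lift_mk]
  show some (max i i) = some i
  rw [max_self]

lemma idx_dom (i : Fin n) (a : Fin 2) (u : V n ⊕ (FG n).edgeSet)
    (hu : u = Sum.inl (some (i, a)) ∨ (M n).Adj u (Sum.inl (some (i, a)))) :
    idx u = some i := by
  rcases u with x | ⟨ev, he⟩
  · rcases hu with h | h
    · rw [h]; rfl
    · exact absurd h (by exact id)
  · have hmem : some (i, a) ∈ ev := by
      rcases hu with h | h
      · exact absurd h (by simp)
      · exact h
    rcases edge_cases ev he with ⟨j, b, rfl⟩ | ⟨j, rfl⟩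
    · rw [idx_spoke]
      rcases Sym2.mem_iff.1 hmem with h | h
      · exact absurd h (by simp)
      · injection h with h
        exact congrArg some (Prod.ext_iff.1 h).1.symm
    · rw [idx_outer]
      rcases Sym2.mem_iff.1 hmem with h | h
      · injection h with h
        exact congrArg some (Prod.ext_iff.1 h).1.symm
      · injection h with h
        exact congrArg some (Prod.ext_iff.1 h).1.symm

lemma dom_none_cases (u : V n ⊕ (FG n).edgeSet)
    (hu : u = Sum.inl none ∨ (M n).Adj u (Sum.inl none)) :
    u = Sum.inl none ∨ ∃ j b, u = Sum.inr ⟨spokeE n j b, spoke_mem j b⟩ := by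
  rcases u with x | ⟨ev, he⟩
  · rcases hu with h | h
    · exact Or.inl h
    · exact absurd h (by exact id)
  · have hmem : (none : V n) ∈ ev := by
      rcases hu with h | h
      · exact absurd h (by simp)
      · exact h
    rcases edge_cases ev he with ⟨j, b, rfl⟩ | ⟨j, rfl⟩
    · exact Or.inr ⟨j, b, rfl⟩
    · exact absurd hmem (by simp [outerE])

lemma lower_bound (S : Set (V n ⊕ (FG n).edgeSet)) (hdom : IsDomSet (M n) S) :
    n + 1 ≤ S.ncard := by
  choose u huS hup using hdom
  set f : Option (Fin n) → V n ⊕ (FG n).edgeSet := fun o =>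
    o.elim (u (Sum.inl none)) (fun i =>
      if u (Sum.inl (some (i, 0))) = u (Sum.inl none) then u (Sum.inl (some (i, 1)))
      else u (Sum.inl (some (i, 0)))) with hf
  have hidx : ∀ i : Fin n, idx (f (some i)) = some i := by
    intro i
    simp only [hf, Option.elim]
    split
    · exact idx_dom i 1 _ (hup _)
    · exact idx_dom i 0 _ (hup _)
  have hfnone : ∀ i : Fin n, f (some i) ≠ f none := by
    intro i h
    simp only [hf, Option.elim] at h
    by_cases hc : u (Sum.inl (some (i, 0))) = u (Sum.inl none)
    · rw [if_pos hc] at h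
      -- u (inl none) is a spoke at (i,0)
      rcases dom_none_cases _ (hup (Sum.inl none)) with h0 | ⟨j, b, hjb⟩
      · have := idx_dom i 0 _ (hup (Sum.inl (some (i, 0))))
        rw [hc, h0] at this
        exact absurd this (by simp [idx, gV])
      · -- u (inl (some (i,0))) = spoke j b, so j = i, b = 0
        have h1 := idx_dom i 0 _ (hup (Sum.inl (some (i, 0))))
        rw [hc, hjb, idx_spoke] at h1
        have hji : j = i := Option.some_injective _ h1
        subst hji
        have hb : b = 0 := by
          rcases hup (Sum.inl (some (j, 0))) with h2 | h2
          · rw [hc, hjb] at h2; exact absurd h2 (by simp)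
          · rw [hc, hjb] at h2
            have : some (j, (0 : Fin 2)) ∈ spokeE n j b := h2
            rcases Sym2.mem_iff.1 this with h3 | h3
            · exact absurd h3 (by simp)
            · injection h3 with h3
              exact (Prod.ext_iff.1 h3).2.symm
        subst hb
        -- now u (inl (some (i,1))) = spoke i 0 : contradiction
        rw [hjb] at h
        rcases hup (Sum.inl (some (j, 1))) with h2 | h2
        · rw [h] at h2; exact absurd h2 (by simp)
        · rw [h] at h2
          have : some (j, (1 : Fin 2)) ∈ spokeE n j 0 := h2
          rcases Sym2.mem_iff.1 this with h3 | h3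
          · exact absurd h3 (by simp)
          · exact absurd h3 (by simp)
    · rw [if_neg hc] at h
      exact hc h
  have hinj : Function.Injective f := by
    intro o₁ o₂ h
    match o₁, o₂ with
    | none, none => rfl
    | none, some i => exact absurd h.symm (hfnone i)
    | some i, none => exact absurd h (hfnone i)
    | some i, some j =>
      have := (hidx i).symm.trans ((congrArg idx h).trans (hidx j))
      rw [Option.some.injEq] at this
      rw [this]
  have hrange : Set.range f ⊆ S := by
    rintro _ ⟨o, rfl⟩
    match o with
    | none => exact huS _
    | some i =>
      simp only [hf, Option.elim]
      split
      · exact huS _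
      · exact huS _
  calc n + 1 = (Set.range f).ncard := by
        rw [Set.ncard_eq_toFinset_card', Set.toFinset_range,
          Finset.card_image_of_injective _ hinj]
        simp
    _ ≤ S.ncard := Set.ncard_le_ncard hrange (Set.toFinite _)

end Stmt10Aux

theorem stmt10 (n : ℕ) (h2 : 2 ≤ n) :
    outConnDomNum (middleGraph (friendshipGraph n)) = n + 1 := by
  have hwit : n + 1 ∈ {k | ∃ S : Set (Stmt10Aux.V n ⊕ (friendshipGraph n).edgeSet),
      IsDomSet (middleGraph (friendshipGraph n)) S ∧
      ((middleGraph (friendshipGraph n)).induce Sᶜ).Connected ∧ S.ncard = k} :=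
    ⟨Stmt10Aux.outS n, Stmt10Aux.outS_dom,
      Stmt10Aux.outS_compl_connected (le_trans one_le_two h2), Stmt10Aux.outS_ncard⟩
  refine le_antisymm (Nat.sInf_le hwit) (le_csInf ⟨_, hwit⟩ ?_)
  rintro k ⟨S, hS, _, rfl⟩
  exact Stmt10Aux.lower_bound S hS
end

section
/- For any connected graph G of order n ≥ 2, the outer-connected domination number of the middle graph of the 2-corona G ∘ P₂ satisfies 2n + ⌈n/2⌉ ≤ γ̃_c(M(G ∘ P₂)) ≤ 3n. -/
open SimpleGraph

namespace Stmt12Aux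

open SimpleGraph

variable {V : Type*} (G : SimpleGraph V)

/-- abbreviation for the vertex type of the middle graph of the 2-corona -/
abbrev MV := (V ⊕ (V ⊕ V)) ⊕ ((corona2 G).edgeSet : Set (Sym2 (V ⊕ (V ⊕ V))))

def vtx (v : V) : MV G := Sum.inl (Sum.inl v)
def av (v : V) : MV G := Sum.inl (Sum.inr (Sum.inl v))
def bv (v : V) : MV G := Sum.inl (Sum.inr (Sum.inr v))

def eEdge (v : V) : (corona2 G).edgeSet :=
  ⟨s(Sum.inl v, Sum.inr (Sum.inl v)), (corona2 G).mem_edgeSet.mpr rfl⟩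
def fEdge (v : V) : (corona2 G).edgeSet :=
  ⟨s(Sum.inr (Sum.inl v), Sum.inr (Sum.inr v)), (corona2 G).mem_edgeSet.mpr rfl⟩

def ev (v : V) : MV G := Sum.inr (eEdge G v)
def fv (v : V) : MV G := Sum.inr (fEdge G v)

lemma corona2_adj_a {v : V} {w} (h : (corona2 G).Adj (Sum.inr (Sum.inl v)) w) :
    w = Sum.inl v ∨ w = Sum.inr (Sum.inr v) := by
  rcases w with w | w | w
  · exact Or.inl (by rw [show v = w from h])
  · exact h.elim
  · exact Or.inr (by rw [show v = w from h])

lemma corona2_adj_b {v : V} {w} (h : (corona2 G).Adj (Sum.inr (Sum.inr v)) w) :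
    w = Sum.inr (Sum.inl v) := by
  rcases w with w | w | w
  · exact h.elim
  · exact by rw [show v = w from h]
  · exact h.elim

lemma edge_of_mem_a {v : V} {g : (corona2 G).edgeSet}
    (h : Sum.inr (Sum.inl v) ∈ (g : Sym2 (V ⊕ (V ⊕ V)))) :
    g = eEdge G v ∨ g = fEdge G v := by
  obtain ⟨y, hy⟩ := Sym2.mem_iff_exists.mp h
  have hadj : (corona2 G).Adj (Sum.inr (Sum.inl v)) y :=
    (corona2 G).mem_edgeSet.mp (hy ▸ g.2)
  rcases corona2_adj_a G hadj with rfl | rfl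
  · exact Or.inl (Subtype.ext (by rw [hy, Sym2.eq_swap]; rfl))
  · exact Or.inr (Subtype.ext (by rw [hy]; rfl))

lemma edge_of_mem_b {v : V} {g : (corona2 G).edgeSet}
    (h : Sum.inr (Sum.inr v) ∈ (g : Sym2 (V ⊕ (V ⊕ V)))) :
    g = fEdge G v := by
  obtain ⟨y, hy⟩ := Sym2.mem_iff_exists.mp h
  have hadj : (corona2 G).Adj (Sum.inr (Sum.inr v)) y :=
    (corona2 G).mem_edgeSet.mp (hy ▸ g.2)
  rw [corona2_adj_b G hadj] at hy
  exact Subtype.ext (by rw [hy, Sym2.eq_swap]; rfl)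

lemma adj_bv {v : V} {x : MV G} :
    (middleGraph (corona2 G)).Adj x (bv G v) ↔ x = fv G v := by
  constructor
  · intro h
    rcases x with w | g
    · exact h.elim
    · exact congrArg Sum.inr (edge_of_mem_b G h)
  · rintro rfl
    exact Sym2.mem_iff.mpr (Or.inr rfl)

lemma adj_av {v : V} {x : MV G} :
    (middleGraph (corona2 G)).Adj x (av G v) ↔ x = ev G v ∨ x = fv G v := by
  constructor
  · intro h
    rcases x with w | g
    · exact h.elim
    · exact (edge_of_mem_a G h).imp (congrArg Sum.inr) (congrArg Sum.inr)
  · rintro (rfl | rfl)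
    · exact Sym2.mem_iff.mpr (Or.inr rfl)
    · exact Sym2.mem_iff.mpr (Or.inl rfl)

lemma eEdge_ne_fEdge {v : V} : eEdge G v ≠ fEdge G v := by
  intro h
  have := Subtype.ext_iff.mp h
  simp only [eEdge, fEdge, Sym2.eq_iff] at this
  rcases this with ⟨h1, _⟩ | ⟨h1, _⟩ <;> exact Sum.inl_ne_inr h1

lemma adj_fv {v : V} {x : MV G} :
    (middleGraph (corona2 G)).Adj x (fv G v) ↔
      x = av G v ∨ x = bv G v ∨ x = ev G v := by
  constructor
  · intro h
    rcases x with w | g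
    · -- h : w ∈ fEdge
      rcases Sym2.mem_iff.mp h with rfl | rfl
      · exact Or.inl rfl
      · exact Or.inr (Or.inl rfl)
    · obtain ⟨hne, z, hzg, hzf⟩ := h
      rcases Sym2.mem_iff.mp hzf with rfl | rfl
      · rcases edge_of_mem_a G hzg with rfl | rfl
        · exact Or.inr (Or.inr rfl)
        · exact absurd rfl hne
      · exact absurd (edge_of_mem_b G hzg) hne
  · rintro (rfl | rfl | rfl)
    · exact Sym2.mem_iff.mpr (Or.inl rfl)
    · exact Sym2.mem_iff.mpr (Or.inr rfl)
    · exact ⟨eEdge_ne_fEdge G, Sum.inr (Sum.inl v),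
        Sym2.mem_iff.mpr (Or.inr rfl), Sym2.mem_iff.mpr (Or.inl rfl)⟩

lemma adj_vtx {v : V} {x : MV G} (h : (middleGraph (corona2 G)).Adj x (vtx G v)) :
    ∃ g : (corona2 G).edgeSet, x = Sum.inr g ∧ Sum.inl v ∈ (g : Sym2 (V ⊕ (V ⊕ V))) := by
  rcases x with w | g
  · exact h.elim
  · exact ⟨g, rfl, h⟩

end Stmt12Aux
namespace Stmt12Aux

open SimpleGraph

variable {V : Type*} (G : SimpleGraph V)

lemma confine {X : Type*} (H : SimpleGraph X) (s A : Set X)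
    (hA : ∀ x ∈ A, ∀ y ∈ s, H.Adj x y → y ∈ A) :
    ∀ {u w : s}, (H.induce s).Walk u w → (u : X) ∈ A → (w : X) ∈ A := by
  intro u w p
  induction p with
  | nil => exact id
  | @cons u z w h q ih => exact fun hu => ih (hA _ hu _ z.2 h)

lemma compl_subset_of_closed {X : Type*} (H : SimpleGraph X) (S A : Set X)
    (hconn : (H.induce Sᶜ).Connected) {x0 : X} (hx0 : x0 ∈ Sᶜ) (hx0A : x0 ∈ A)
    (hA : ∀ x ∈ A, ∀ y ∈ Sᶜ, H.Adj x y → y ∈ A) : Sᶜ ⊆ A := by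
  intro y hy
  obtain ⟨p⟩ := hconn.preconnected ⟨x0, hx0⟩ ⟨y, hy⟩
  exact confine H Sᶜ A hA p hx0A

def inlHom : G →g corona2 G := ⟨Sum.inl, fun h => h⟩

lemma corona2_connected (hc : G.Connected) : (corona2 G).Connected := by
  have key : ∀ z : V ⊕ (V ⊕ V), ∃ v : V, (corona2 G).Reachable z (Sum.inl v) := by
    rintro (v | v | v)
    · exact ⟨v, Reachable.refl _⟩
    · exact ⟨v, Adj.reachable (show (corona2 G).Adj (Sum.inr (Sum.inl v)) (Sum.inl v) from rfl)⟩
    · exact ⟨v, (Adj.reachable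
        (show (corona2 G).Adj (Sum.inr (Sum.inr v)) (Sum.inr (Sum.inl v)) from rfl)).trans
        (Adj.reachable (show (corona2 G).Adj (Sum.inr (Sum.inl v)) (Sum.inl v) from rfl))⟩
  have hne : Nonempty (V ⊕ (V ⊕ V)) := ⟨Sum.inl hc.nonempty.some⟩
  rw [connected_iff]
  refine ⟨fun x y => ?_, hne⟩
  obtain ⟨vx, hx⟩ := key x
  obtain ⟨vy, hy⟩ := key y
  exact hx.trans (((hc.preconnected vx vy).map (inlHom G)).trans hy.symm)

lemma reach_edges (S : Set (MV G))
    (hS : ∀ g : (corona2 G).edgeSet, (Sum.inr g : MV G) ∈ S) :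
    ∀ {x y : V ⊕ (V ⊕ V)} (_ : (corona2 G).Walk x y) (e f : (corona2 G).edgeSet),
      x ∈ (e : Sym2 (V ⊕ (V ⊕ V))) → y ∈ (f : Sym2 (V ⊕ (V ⊕ V))) →
      ((middleGraph (corona2 G)).induce S).Reachable ⟨Sum.inr e, hS e⟩ ⟨Sum.inr f, hS f⟩ := by
  have step : ∀ (e f : (corona2 G).edgeSet) (z : V ⊕ (V ⊕ V)),
      z ∈ (e : Sym2 (V ⊕ (V ⊕ V))) → z ∈ (f : Sym2 (V ⊕ (V ⊕ V))) →
      ((middleGraph (corona2 G)).induce S).Reachable ⟨Sum.inr e, hS e⟩ ⟨Sum.inr f, hS f⟩ := by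
    intro e f z hze hzf
    by_cases hef : e = f
    · subst hef; exact Reachable.refl _
    · exact Adj.reachable
        (show (middleGraph (corona2 G)).Adj (Sum.inr e) (Sum.inr f) from ⟨hef, z, hze, hzf⟩)
  intro x y p
  induction p with
  | nil => exact fun e f hx hy => step e f _ hx hy
  | @cons x z y h q ih =>
      intro e f hx hy
      exact (step e ⟨s(x, z), (corona2 G).mem_edgeSet.mpr h⟩ x hx
        (Sym2.mem_iff.mpr (Or.inl rfl))).trans (ih _ f (Sym2.mem_iff.mpr (Or.inr rfl)) hy)

end Stmt12Aux
namespace Stmt12Aux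

open SimpleGraph

variable {V : Type*} (G : SimpleGraph V)

lemma upper_mem [Fintype V] (n : ℕ) (hn : Fintype.card V = n) (h2 : 2 ≤ n)
    (hc : G.Connected) :
    3 * n ∈ {k | ∃ S : Set (MV G), IsDomSet (middleGraph (corona2 G)) S ∧
      ((middleGraph (corona2 G)).induce Sᶜ).Connected ∧ S.ncard = k} := by
  refine ⟨Set.range Sum.inl, ?_, ?_, ?_⟩
  · rintro (w | g)
    · exact ⟨Sum.inl w, Set.mem_range_self w, Or.inl rfl⟩
    · exact ⟨Sum.inl (g : Sym2 (V ⊕ (V ⊕ V))).out.1, Set.mem_range_self _,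
        Or.inr (Sym2.out_fst_mem _)⟩
  · have hS : ∀ g : (corona2 G).edgeSet,
        (Sum.inr g : MV G) ∈ (Set.range (Sum.inl : _ → MV G))ᶜ := by
      rintro g ⟨w, hw⟩; exact Sum.inl_ne_inr hw
    have hv0 : Nonempty V := hc.nonempty
    rw [connected_iff]
    constructor
    · rintro ⟨x | e, hx⟩ ⟨y | f, hy⟩
      · exact absurd (Set.mem_range_self x) hx
      · exact absurd (Set.mem_range_self x) hx
      · exact absurd (Set.mem_range_self y) hy
      · obtain ⟨p⟩ := (corona2_connected G hc).preconnected
          (e : Sym2 (V ⊕ (V ⊕ V))).out.1 (f : Sym2 (V ⊕ (V ⊕ V))).out.1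
        exact reach_edges G _ hS p e f (Sym2.out_fst_mem _) (Sym2.out_fst_mem _)
    · exact ⟨⟨Sum.inr (fEdge G hv0.some), hS _⟩⟩
  · rw [← Set.image_univ, Set.ncard_image_of_injective _ Sum.inl_injective,
      Set.ncard_univ, Nat.card_eq_fintype_card]
    simp [hn]
    omega

end Stmt12Aux
namespace Stmt12Aux

open SimpleGraph

variable {V : Type*} (G : SimpleGraph V)

lemma fEdge_inj : Function.Injective (fEdge G) := by
  intro v w h
  have := Subtype.ext_iff.mp h
  simp only [fEdge, Sym2.eq_iff, Sum.inr.injEq, Sum.inl.injEq] at this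
  tauto

lemma eEdge_inj : Function.Injective (eEdge G) := by
  intro v w h
  have := Subtype.ext_iff.mp h
  simp only [eEdge, Sym2.eq_iff, Sum.inr.injEq, Sum.inl.injEq] at this
  tauto

lemma efInj : Function.Injective (fun x : V ⊕ V => Sum.elim (eEdge G) (fEdge G) x) := by
  rintro (v | v) (w | w) h <;> simp only [Sum.elim_inl, Sum.elim_inr] at h
  · exact congrArg Sum.inl (eEdge_inj G h)
  · exact absurd (Subtype.ext_iff.mp h) (by simp [eEdge, fEdge, Sym2.eq_iff])
  · exact absurd (Subtype.ext_iff.mp h.symm) (by simp [eEdge, fEdge, Sym2.eq_iff])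
  · exact congrArg Sum.inr (fEdge_inj G h)

lemma card_MV [Fintype V] (n : ℕ) (hn : Fintype.card V = n) :
    5 * n ≤ Nat.card (MV G) := by
  classical
  have h1 : Nat.card (MV G) = Nat.card (V ⊕ (V ⊕ V)) + Nat.card ((corona2 G).edgeSet) :=
    Nat.card_sum
  have h2 : Nat.card (V ⊕ V) ≤ Nat.card ((corona2 G).edgeSet) :=
    Nat.card_le_card_of_injective _ (efInj G)
  rw [h1]
  simp only [Nat.card_eq_fintype_card, Fintype.card_sum, hn] at h2 ⊢
  omega

end Stmt12Aux
namespace Stmt12Aux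

open SimpleGraph

variable {V : Type*} (G : SimpleGraph V)

/-- at most two vertices can be dominated by a fixed element `u` among the `vtx`s -/
lemma fiber_le {u : MV G} {v w x : V}
    (hv : u = vtx G v ∨ (middleGraph (corona2 G)).Adj u (vtx G v))
    (hw : u = vtx G w ∨ (middleGraph (corona2 G)).Adj u (vtx G w))
    (hx : u = vtx G x ∨ (middleGraph (corona2 G)).Adj u (vtx G x)) :
    v = w ∨ v = x ∨ w = x := by
  have mem_of : ∀ z : V, (u = vtx G z ∨ (middleGraph (corona2 G)).Adj u (vtx G z)) →
      (∃ c, u = Sum.inl c ∧ c = Sum.inl z) ∨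
      (∃ g : (corona2 G).edgeSet, u = Sum.inr g ∧
        Sum.inl z ∈ (g : Sym2 (V ⊕ (V ⊕ V)))) := by
    intro z hz
    rcases hz with rfl | hadj
    · exact Or.inl ⟨Sum.inl z, rfl, rfl⟩
    · obtain ⟨g, rfl, hg⟩ := adj_vtx G hadj
      exact Or.inr ⟨g, rfl, hg⟩
  rcases u with c | g
  · -- all three must equal vtx
    have h1 := mem_of v hv; have h2 := mem_of w hw
    rcases h1 with ⟨c1, hc1, rfl⟩ | ⟨g, hg, _⟩
    · rcases h2 with ⟨c2, hc2, rfl⟩ | ⟨g, hg, _⟩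
      · left
        have := hc1.symm.trans hc2
        exact Sum.inl_injective (Sum.inl_injective this)
      · exact (Sum.inl_ne_inr hg).elim
    · exact (Sum.inl_ne_inr hg).elim
  · have getmem : ∀ z : V, ((Sum.inr g : MV G) = vtx G z ∨
        (middleGraph (corona2 G)).Adj (Sum.inr g) (vtx G z)) →
        Sum.inl z ∈ (g : Sym2 (V ⊕ (V ⊕ V))) := by
      intro z hz
      rcases mem_of z hz with ⟨c, hc, _⟩ | ⟨g', hg', hmem⟩
      · exact (Sum.inr_ne_inl hc).elim
      · rwa [show g = g' from Sum.inr_injective hg']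
    have hv' := getmem v hv
    have hw' := getmem w hw
    have hx' := getmem x hx
    obtain ⟨y, hy⟩ := Sym2.mem_iff_exists.mp hv'
    rw [hy, Sym2.mem_iff] at hw' hx'
    rcases hw' with hw' | hw'
    · exact Or.inl (Sum.inl_injective hw'.symm)
    · rcases hx' with hx' | hx'
      · exact Or.inr (Or.inl (Sum.inl_injective hx'.symm))
      · exact Or.inr (Or.inr (Sum.inl_injective (hw'.trans hx'.symm)))

lemma lower_bound [Fintype V] (n : ℕ) (hn : Fintype.card V = n) (h2 : 2 ≤ n)
    (hc : G.Connected) (S : Set (MV G)) (hdom : IsDomSet (middleGraph (corona2 G)) S)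
    (hconn : ((middleGraph (corona2 G)).induce Sᶜ).Connected) :
    2 * n + (n + 1) / 2 ≤ S.ncard := by
  classical
  have hcardMV := card_MV G n hn
  have hcompl := Set.ncard_add_ncard_compl S (Set.toFinite _) (Set.toFinite _)
  by_cases hB : ∀ v : V, bv G v ∈ S
  · by_cases hAF : ∀ v : V, av G v ∈ S ∨ fv G v ∈ S
    · -- main case
      -- choose dominators of the vtx's
      have hφ : ∀ v : V, ∃ u, u ∈ S ∧ (u = vtx G v ∨
          (middleGraph (corona2 G)).Adj u (vtx G v)) := by
        intro v
        obtain ⟨u, huS, hu⟩ := hdom (vtx G v)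
        exact ⟨u, huS, hu⟩
      choose φ hφS hφp using hφ
      -- the three sets
      set B : Set (MV G) := Set.range (bv G) with hBdef
      set A2 : Set (MV G) :=
        Set.range (fun v => if av G v ∈ S then av G v else fv G v) with hA2def
      set Φ : Set (MV G) := ↑(Finset.univ.image φ) with hΦdef
      have hBsub : B ⊆ S := by rintro _ ⟨v, rfl⟩; exact hB v
      have hA2sub : A2 ⊆ S := by
        rintro _ ⟨v, rfl⟩
        dsimp only
        split_ifs with h
        · exact h
        · exact (hAF v).resolve_left h
      have hΦsub : Φ ⊆ S := by
        rintro u hu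
        obtain ⟨v, _, rfl⟩ := Finset.mem_image.mp hu
        exact hφS v
      -- cardinalities
      have hBcard : B.ncard = n := by
        rw [hBdef, ← Set.image_univ, Set.ncard_image_of_injective _
          (fun v w h => by simpa [bv] using h), Set.ncard_univ,
          Nat.card_eq_fintype_card, hn]
      have hA2card : A2.ncard = n := by
        rw [hA2def, ← Set.image_univ, Set.ncard_image_of_injective _ ?_, Set.ncard_univ,
          Nat.card_eq_fintype_card, hn]
        intro v w h
        dsimp only at h
        split_ifs at h
        · simpa [av] using h
        · exact absurd h (by simp [av, fv])
        · exact absurd h (by simp [av, fv])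
        · exact fEdge_inj G (by simpa [fv] using h)
      have hΦcount : n ≤ 2 * Φ.ncard := by
        rw [hΦdef, Set.ncard_coe_finset]
        have := Finset.card_le_mul_card_image (f := φ) Finset.univ 2 ?_
        · rwa [Finset.card_univ, hn] at this
        · intro u _
          by_contra hgt
          push_neg at hgt
          obtain ⟨a, ha, b, hb, c, hcc, hab, hac, hbc⟩ := Finset.two_lt_card.mp hgt
          simp only [Finset.mem_filter] at ha hb hcc
          rcases fiber_le G (ha.2 ▸ hφp a) (hb.2 ▸ hφp b) (hcc.2 ▸ hφp c) with h | h | h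
          · exact hab h
          · exact hac h
          · exact hbc h
      -- disjointness
      have hpredform : ∀ u ∈ Φ, (∃ w : V, u = vtx G w) ∨
          (∃ g : (corona2 G).edgeSet, u = Sum.inr g ∧
            ∃ w : V, Sum.inl w ∈ (g : Sym2 (V ⊕ (V ⊕ V)))) := by
        intro u hu
        obtain ⟨v, _, rfl⟩ := Finset.mem_image.mp hu
        rcases hφp v with h | h
        · exact Or.inl ⟨v, h⟩
        · obtain ⟨g, heq, hg⟩ := adj_vtx G h
          exact Or.inr ⟨g, heq, v, hg⟩
      have hd1 : Disjoint B A2 := by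
        rw [Set.disjoint_left]
        rintro _ ⟨v, rfl⟩ ⟨w, hw⟩
        dsimp only at hw
        split_ifs at hw
        · exact absurd hw (by simp [av, bv])
        · exact absurd hw (by simp [fv, bv])
      have hd2 : Disjoint (B ∪ A2) Φ := by
        rw [Set.disjoint_left]
        rintro x hx hxΦ
        rcases hpredform x hxΦ with ⟨w, rfl⟩ | ⟨g, rfl, w, hw⟩
        · rcases hx with ⟨v, hv⟩ | ⟨v, hv⟩
          · exact absurd hv (by simp [bv, vtx])
          · dsimp only at hv
            split_ifs at hv
            · exact absurd hv (by simp [av, vtx])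
            · exact absurd hv (by simp [fv, vtx])
        · rcases hx with ⟨v, hv⟩ | ⟨v, hv⟩
          · exact absurd hv (by simp [bv])
          · dsimp only at hv
            split_ifs at hv
            · exact absurd hv (by simp [av])
            · -- fv G v = Sum.inr g, but g contains Sum.inl w
              have hg := Sum.inr_injective
                (show (Sum.inr (fEdge G v) : MV G) = Sum.inr g from hv)
              rw [← hg] at hw
              rcases Sym2.mem_iff.mp hw with h | h <;> exact Sum.inl_ne_inr h
      have hunion : (B ∪ A2 ∪ Φ).ncard = n + n + Φ.ncard := by
        rw [Set.ncard_union_eq hd2 (Set.toFinite _) (Set.toFinite _),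
          Set.ncard_union_eq hd1 (Set.toFinite _) (Set.toFinite _), hBcard, hA2card]
      have hsub : (B ∪ A2 ∪ Φ) ⊆ S := Set.union_subset (Set.union_subset hBsub hA2sub) hΦsub
      have hle := Set.ncard_le_ncard hsub (Set.toFinite _)
      omega
    · -- degenerate case: some v with av, fv ∉ S
      push_neg at hAF
      obtain ⟨v, hav, hfv⟩ := hAF
      have hev : ev G v ∈ S := by
        obtain ⟨u, huS, hu⟩ := hdom (av G v)
        rcases hu with rfl | hadj
        · exact absurd huS hav
        · rcases (adj_av G).mp hadj with rfl | rfl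
          · exact huS
          · exact absurd huS hfv
      have hAclosed : ∀ x ∈ ({av G v, fv G v} : Set (MV G)), ∀ y ∈ Sᶜ,
          (middleGraph (corona2 G)).Adj x y → y ∈ ({av G v, fv G v} : Set (MV G)) := by
        rintro x (rfl | rfl) y hy hadj
        · rcases (adj_av G).mp hadj.symm with rfl | rfl
          · exact absurd hev hy
          · exact Or.inr rfl
        · rcases (adj_fv G).mp hadj.symm with rfl | rfl | rfl
          · exact Or.inl rfl
          · exact absurd (hB v) hy
          · exact absurd hev hy
      have hsub : Sᶜ ⊆ {av G v, fv G v} :=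
        compl_subset_of_closed _ S _ hconn hav (Or.inl rfl) hAclosed
      have := Set.ncard_le_ncard hsub (Set.toFinite _)
      have hpair : ({av G v, fv G v} : Set (MV G)).ncard ≤ 2 :=
        (Set.ncard_insert_le _ _).trans (by simp)
      omega
  · -- degenerate case: some v with bv ∉ S
    push_neg at hB
    obtain ⟨v, hbv⟩ := hB
    have hfv : fv G v ∈ S := by
      obtain ⟨u, huS, hu⟩ := hdom (bv G v)
      rcases hu with rfl | hadj
      · exact absurd huS hbv
      · rwa [(adj_bv G).mp hadj] at huS
    have hAclosed : ∀ x ∈ ({bv G v} : Set (MV G)), ∀ y ∈ Sᶜ,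
        (middleGraph (corona2 G)).Adj x y → y ∈ ({bv G v} : Set (MV G)) := by
      rintro x rfl y hy hadj
      rw [(adj_bv G).mp hadj.symm] at hy
      exact absurd hfv hy
    have hsub : Sᶜ ⊆ {bv G v} :=
      compl_subset_of_closed _ S _ hconn hbv rfl hAclosed
    have := Set.ncard_le_ncard hsub (Set.toFinite _)
    have hone : ({bv G v} : Set (MV G)).ncard ≤ 1 := by simp
    omega

end Stmt12Aux

theorem stmt12 {V : Type*} [Fintype V] (G : SimpleGraph V) (n : ℕ)
    (hn : Fintype.card V = n) (h2 : 2 ≤ n) (hc : G.Connected) :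
    2 * n + (n + 1) / 2 ≤ outConnDomNum (middleGraph (corona2 G)) ∧
      outConnDomNum (middleGraph (corona2 G)) ≤ 3 * n := by
  have hmem := Stmt12Aux.upper_mem G n hn h2 hc
  constructor
  · have hsInf := Nat.sInf_mem ⟨3 * n, hmem⟩
    obtain ⟨S, hdom, hconn, hcard⟩ := hsInf
    rw [outConnDomNum, ← hcard]
    exact Stmt12Aux.lower_bound G n hn h2 hc S hdom hconn
  · exact Nat.sInf_le hmem
end

section
/- For any connected graph G of order n ≥ 2 and any integer p < n, the outer-connected domination number of the middle graph of the join satisfies ⌈(n+p)/2⌉ ≤ γ̃_c(M(G + K̄_p)) ≤ n. -/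
open SimpleGraph

section Stmt14Aux


lemma two_mul_bound {α β : Type*} [Finite α] [Finite β] (T : Set α) (B : Set β)
    (R : α → β → Prop) (hcov : ∀ x ∈ T, ∃ e ∈ B, R x e)
    (hsmall : ∀ e, {x | R x e}.ncard ≤ 2) : T.ncard ≤ 2 * B.ncard := by
  classical
  have hT : T.Finite := Set.toFinite T
  have hB : B.Finite := Set.toFinite B
  have hsub : hT.toFinset ⊆ hB.toFinset.biUnion fun e => (Set.toFinite {x | R x e}).toFinset := by
    intro x hx
    rw [Set.Finite.mem_toFinset] at hx
    obtain ⟨e, he, hr⟩ := hcov x hx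
    simp only [Finset.mem_biUnion, Set.Finite.mem_toFinset]
    exact ⟨e, he, hr⟩
  calc T.ncard = hT.toFinset.card := Set.ncard_eq_toFinset_card T hT
    _ ≤ (hB.toFinset.biUnion fun e => (Set.toFinite {x | R x e}).toFinset).card :=
        Finset.card_le_card hsub
    _ ≤ ∑ e ∈ hB.toFinset, (Set.toFinite {x | R x e}).toFinset.card := Finset.card_biUnion_le
    _ ≤ ∑ _e ∈ hB.toFinset, 2 := by
        refine Finset.sum_le_sum fun e _ => ?_
        rw [← Set.ncard_eq_toFinset_card]
        exact hsmall e
    _ = 2 * B.ncard := by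
        rw [Finset.sum_const, smul_eq_mul, ← Set.ncard_eq_toFinset_card B hB, mul_comm]

variable {V : Type*}

lemma mg_adj_ve {K : SimpleGraph V} {v : V} {e : K.edgeSet} :
    (middleGraph K).Adj (Sum.inl v) (Sum.inr e) ↔ v ∈ (e : Sym2 V) := Iff.rfl
lemma mg_adj_ev {K : SimpleGraph V} {v : V} {e : K.edgeSet} :
    (middleGraph K).Adj (Sum.inr e) (Sum.inl v) ↔ v ∈ (e : Sym2 V) := Iff.rfl
lemma mg_adj_ee {K : SimpleGraph V} {e f : K.edgeSet} :
    (middleGraph K).Adj (Sum.inr e) (Sum.inr f) ↔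
      e ≠ f ∧ ∃ v, v ∈ (e : Sym2 V) ∧ v ∈ (f : Sym2 V) := Iff.rfl
lemma mg_not_adj_vv {K : SimpleGraph V} {v w : V} :
    ¬ (middleGraph K).Adj (Sum.inl v) (Sum.inl w) := fun h => h

def crossEdge (G : SimpleGraph V) (p : ℕ) (f : Fin p → V) (q : Fin p) :
    (joinEmpty G p).edgeSet :=
  ⟨s(Sum.inl (f q), Sum.inr q), (joinEmpty G p).mem_edgeSet.mpr trivial⟩

def domS (G : SimpleGraph V) (p : ℕ) (f : Fin p → V) :
    Set ((V ⊕ Fin p) ⊕ (joinEmpty G p).edgeSet) :=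
  (Sum.inl ∘ Sum.inl) '' (Set.range f)ᶜ ∪ Sum.inr '' Set.range (crossEdge G p f)

variable {G : SimpleGraph V} {p : ℕ} {f : Fin p → V}

lemma mem_domS_inl_inl {v : V} : Sum.inl (Sum.inl v) ∈ domS G p f ↔ v ∉ Set.range f := by
  simp [domS]

lemma not_mem_domS_inl_inr {q : Fin p} : Sum.inl (Sum.inr q) ∉ domS G p f := by
  simp [domS]

lemma mem_domS_inr {e : (joinEmpty G p).edgeSet} :
    Sum.inr e ∈ domS G p f ↔ ∃ q, e = crossEdge G p f q := by
  simp [domS, eq_comm]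

lemma crossEdge_injective (hf : Function.Injective f) :
    Function.Injective (crossEdge G p f) := by
  intro q q' h
  have := congrArg Subtype.val h
  simp only [crossEdge, Sym2.eq, Sym2.rel_iff', Prod.mk.injEq, Prod.swap_prod_mk] at this
  rcases this with ⟨h1, h2⟩ | ⟨h1, h2⟩
  · exact Sum.inr.inj h2
  · exact absurd h1 (by simp)

lemma domS_isDom : IsDomSet (middleGraph (joinEmpty G p)) (domS G p f) := by
  rintro (⟨v | q⟩ | e)
  · by_cases hv : v ∈ Set.range f
    · obtain ⟨q, rfl⟩ := hv
      refine ⟨Sum.inr (crossEdge G p f q), mem_domS_inr.mpr ⟨q, rfl⟩, Or.inr ?_⟩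
      rw [mg_adj_ev]
      exact Sym2.mem_mk_left _ _
    · exact ⟨Sum.inl (Sum.inl v), mem_domS_inl_inl.mpr hv, Or.inl rfl⟩
  · refine ⟨Sum.inr (crossEdge G p f q), mem_domS_inr.mpr ⟨q, rfl⟩, Or.inr ?_⟩
    rw [mg_adj_ev]
    exact Sym2.mem_mk_right _ _
  · obtain ⟨e, he⟩ := e
    induction e using Sym2.ind with
    | _ a b =>
      rw [SimpleGraph.mem_edgeSet] at he
      have key : ∀ (x : V ⊕ Fin p) (q : Fin p) (he' : s(x, b) ∈ (joinEmpty G p).edgeSet),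
          x ∈ (crossEdge G p f q : Sym2 (V ⊕ Fin p)) →
          ∃ u ∈ domS G p f, u = Sum.inr ⟨s(x, b), he'⟩ ∨
            (middleGraph (joinEmpty G p)).Adj u (Sum.inr ⟨s(x, b), he'⟩) := by
        intro x q he' hx
        refine ⟨Sum.inr (crossEdge G p f q), mem_domS_inr.mpr ⟨q, rfl⟩, ?_⟩
        by_cases heq : crossEdge G p f q = (⟨s(x, b), he'⟩ : (joinEmpty G p).edgeSet)
        · exact Or.inl (congrArg Sum.inr heq)
        · exact Or.inr (mg_adj_ee.mpr ⟨heq, x, hx, Sym2.mem_mk_left _ _⟩)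
      rcases em (∃ q, a = Sum.inr q) with ⟨q, rfl⟩ | hq
      · exact key _ q _ (Sym2.mem_mk_right _ _)
      · obtain ⟨v, rfl⟩ : ∃ v, a = Sum.inl v := by
          rcases a with v | q
          · exact ⟨v, rfl⟩
          · exact absurd ⟨q, rfl⟩ hq
        by_cases hv : v ∈ Set.range f
        · obtain ⟨q, rfl⟩ := hv
          exact key _ q _ (Sym2.mem_mk_left _ _)
        · refine ⟨Sum.inl (Sum.inl v), mem_domS_inl_inl.mpr hv, Or.inr ?_⟩
          rw [mg_adj_ve]
          exact Sym2.mem_mk_left _ _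

lemma ncard_domS [Fintype V] (hf : Function.Injective f) (hpn : p ≤ Fintype.card V) :
    (domS G p f).ncard = Fintype.card V := by
  have hinj : Function.Injective ((Sum.inl ∘ Sum.inl) :
      V → (V ⊕ Fin p) ⊕ (joinEmpty G p).edgeSet) :=
    Sum.inl_injective.comp Sum.inl_injective
  have hdisj : Disjoint ((Sum.inl ∘ Sum.inl) '' (Set.range f)ᶜ :
        Set ((V ⊕ Fin p) ⊕ (joinEmpty G p).edgeSet))
      (Sum.inr '' Set.range (crossEdge G p f)) := by
    rw [Set.disjoint_left]
    rintro x ⟨v, -, rfl⟩ ⟨e, -, h⟩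
    exact Sum.inl_ne_inr h.symm
  rw [domS, Set.ncard_union_eq hdisj (Set.toFinite _) (Set.toFinite _),
    Set.ncard_image_of_injective _ hinj, Set.ncard_image_of_injective _ Sum.inr_injective]
  have hr : (Set.range f).ncard = p := by
    rw [← Nat.card_coe_set_eq, Nat.card_range_of_injective hf, Nat.card_eq_fintype_card,
      Fintype.card_fin]
  have hcr : (Set.range (crossEdge G p f)).ncard = p := by
    rw [← Nat.card_coe_set_eq, Nat.card_range_of_injective (crossEdge_injective hf),
      Nat.card_eq_fintype_card, Fintype.card_fin]
  have hcompl := Set.ncard_add_ncard_compl (Set.range f)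
  rw [Nat.card_eq_fintype_card] at hcompl
  omega

lemma exists_adj_of_conn [Fintype V] (hc : G.Connected) (h2 : 2 ≤ Fintype.card V) (v : V) :
    ∃ w, G.Adj v w := by
  obtain ⟨w, hw⟩ := Fintype.exists_ne_of_one_lt_card (by omega) v
  obtain ⟨Wk⟩ := hc.preconnected v w
  cases Wk with
  | nil => exact absurd rfl hw
  | cons h _ => exact ⟨_, h⟩

lemma domS_compl_connected_zero [Fintype V] (hc : G.Connected) (h2 : 2 ≤ Fintype.card V)
    (f : Fin 0 → V) :
    ((middleGraph (joinEmpty G 0)).induce (domS G 0 f)ᶜ).Connected := by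
  set M := middleGraph (joinEmpty G 0) with hM
  have hce : ∀ e : (joinEmpty G 0).edgeSet, Sum.inr e ∈ (domS G 0 f)ᶜ := by
    intro e h
    obtain ⟨q, -⟩ := mem_domS_inr.mp h
    exact q.elim0
  -- every edge of joinEmpty G 0 contains a left vertex, and any left vertex it contains
  -- comes with a G-adjacency
  have hclass : ∀ e : (joinEmpty G 0).edgeSet, ∃ a : V, Sum.inl a ∈ (e : Sym2 (V ⊕ Fin 0)) := by
    rintro ⟨e, he⟩
    induction e using Sym2.ind with
    | _ a b =>
      rcases a with v | q
      · exact ⟨v, Sym2.mem_mk_left _ _⟩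
      · exact q.elim0
  have step : ∀ (e e' : (joinEmpty G 0).edgeSet) (x : V ⊕ Fin 0),
      x ∈ (e : Sym2 (V ⊕ Fin 0)) → x ∈ (e' : Sym2 (V ⊕ Fin 0)) →
      (M.induce (domS G 0 f)ᶜ).Reachable ⟨Sum.inr e, hce e⟩ ⟨Sum.inr e', hce e'⟩ := by
    intro e e' x hx hx'
    by_cases heq : e = e'
    · subst heq; rfl
    · exact (SimpleGraph.Adj.reachable (mg_adj_ee.mpr ⟨heq, x, hx, hx'⟩))
  have key : ∀ (a b : V) (W : G.Walk a b) (e e' : (joinEmpty G 0).edgeSet),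
      Sum.inl a ∈ (e : Sym2 (V ⊕ Fin 0)) → Sum.inl b ∈ (e' : Sym2 (V ⊕ Fin 0)) →
      (M.induce (domS G 0 f)ᶜ).Reachable ⟨Sum.inr e, hce e⟩ ⟨Sum.inr e', hce e'⟩ := by
    intro a b W
    induction W with
    | nil => intro e e' ha hb; exact step e e' _ ha hb
    | @cons u c b h W ih =>
      intro e e' ha hb
      have hmid : s(Sum.inl u, Sum.inl c) ∈ (joinEmpty G 0).edgeSet :=
        (joinEmpty G 0).mem_edgeSet.mpr h
      exact (step e ⟨_, hmid⟩ _ ha (Sym2.mem_mk_left _ _)).trans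
        (ih ⟨_, hmid⟩ e' (Sym2.mem_mk_right _ _) hb)
  rw [SimpleGraph.connected_iff]
  constructor
  · rintro ⟨x, hx⟩ ⟨y, hy⟩
    have hx' : ∃ e, x = Sum.inr e := by
      rcases x with (⟨v | q⟩ | e)
      · exact absurd (mem_domS_inl_inl.mpr (by rintro ⟨q, -⟩; exact q.elim0)) hx
      · exact q.elim0
      · exact ⟨e, rfl⟩
    have hy' : ∃ e, y = Sum.inr e := by
      rcases y with (⟨v | q⟩ | e)
      · exact absurd (mem_domS_inl_inl.mpr (by rintro ⟨q, -⟩; exact q.elim0)) hy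
      · exact q.elim0
      · exact ⟨e, rfl⟩
    obtain ⟨e, rfl⟩ := hx'
    obtain ⟨e', rfl⟩ := hy'
    obtain ⟨a, ha⟩ := hclass e
    obtain ⟨a', ha'⟩ := hclass e'
    obtain ⟨W⟩ := hc.preconnected a a'
    exact key a a' W e e' ha ha'
  · have : Nonempty V := Fintype.card_pos_iff.mp (by omega)
    obtain ⟨w, hw⟩ := exists_adj_of_conn hc h2 (Classical.arbitrary V)
    have hmem : s(Sum.inl (Classical.arbitrary V), Sum.inl w) ∈ (joinEmpty G 0).edgeSet :=
      (joinEmpty G 0).mem_edgeSet.mpr hw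
    exact ⟨⟨Sum.inr ⟨_, hmem⟩, hce _⟩⟩

def crossE (G : SimpleGraph V) (p : ℕ) (v : V) (q : Fin p) : (joinEmpty G p).edgeSet :=
  ⟨s(Sum.inl v, Sum.inr q), (joinEmpty G p).mem_edgeSet.mpr trivial⟩

lemma crossE_mem_compl {v : V} {q : Fin p} (hv : v ≠ f q) :
    Sum.inr (crossE G p v q) ∈ (domS G p f)ᶜ := by
  intro h
  obtain ⟨q', hq'⟩ := mem_domS_inr.mp h
  have := congrArg Subtype.val hq'
  simp only [crossE, crossEdge, Sym2.eq, Sym2.rel_iff', Prod.mk.injEq, Prod.swap_prod_mk] at this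
  rcases this with ⟨ha, hb⟩ | ⟨ha, hb⟩
  · cases Sum.inr.inj hb; exact hv (Sum.inl.inj ha)
  · exact absurd ha (by simp)

lemma crossE_ne {v v' : V} {q q' : Fin p} (h : v ≠ v' ∨ q ≠ q') :
    crossE G p v q ≠ crossE G p v' q' := by
  intro heq
  have := congrArg Subtype.val heq
  simp only [crossE, Sym2.eq, Sym2.rel_iff', Prod.mk.injEq, Prod.swap_prod_mk] at this
  rcases this with ⟨ha, hb⟩ | ⟨ha, hb⟩
  · cases Sum.inl.inj ha; cases Sum.inr.inj hb; rcases h with h | h <;> exact h rfl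
  · exact absurd ha (by simp)

lemma gedge_mem_compl {a c : V} (h : s(Sum.inl a, Sum.inl c) ∈ (joinEmpty G p).edgeSet) :
    Sum.inr (⟨s(Sum.inl a, Sum.inl c), h⟩ : (joinEmpty G p).edgeSet) ∈ (domS G p f)ᶜ := by
  intro hmem
  obtain ⟨q, hq⟩ := mem_domS_inr.mp hmem
  have := congrArg Subtype.val hq
  simp only [crossEdge, Sym2.eq, Sym2.rel_iff', Prod.mk.injEq, Prod.swap_prod_mk] at this
  rcases this with ⟨ha, hb⟩ | ⟨ha, hb⟩
  · exact absurd hb (by simp)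
  · exact absurd ha (by simp)

lemma gedge_ne_crossE {a c v : V} {q : Fin p} (h : s(Sum.inl a, Sum.inl c) ∈ (joinEmpty G p).edgeSet) :
    (⟨s(Sum.inl a, Sum.inl c), h⟩ : (joinEmpty G p).edgeSet) ≠ crossE G p v q := by
  intro heq
  have := congrArg Subtype.val heq
  simp only [crossE, Sym2.eq, Sym2.rel_iff', Prod.mk.injEq, Prod.swap_prod_mk] at this
  rcases this with ⟨ha, hb⟩ | ⟨ha, hb⟩
  · exact absurd hb (by simp)
  · exact absurd ha (by simp)

lemma domS_compl_connected_pos [Fintype V] (hc : G.Connected) (h2 : 2 ≤ Fintype.card V)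
    (hp : 0 < p) (hpn : p < Fintype.card V) (hf : Function.Injective f) :
    ((middleGraph (joinEmpty G p)).induce (domS G p f)ᶜ).Connected := by
  classical
  set M := middleGraph (joinEmpty G p) with hM
  set S := domS G p f with hS
  set I := M.induce Sᶜ with hI
  set q0 : Fin p := ⟨0, hp⟩ with hq0
  set b : (V ⊕ Fin p) ⊕ (joinEmpty G p).edgeSet := Sum.inl (Sum.inr q0) with hbdef
  have hb : b ∈ Sᶜ := not_mem_domS_inl_inr
  have hpick : 2 < Fintype.card V → ∀ x y : V, ∃ v, v ≠ x ∧ v ≠ y := by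
    intro h3 x y
    have hcard : ¬ (Finset.univ : Finset V) ⊆ {x, y} := by
      intro hsub
      have h1 := Finset.card_le_card hsub
      have h4 : ({x, y} : Finset V).card ≤ 2 := (Finset.card_insert_le _ _).trans (by simp)
      rw [Finset.card_univ] at h1
      omega
    obtain ⟨v, -, hv⟩ := Finset.not_subset.mp hcard
    simp only [Finset.mem_insert, Finset.mem_singleton, not_or] at hv
    exact ⟨v, hv.1, hv.2⟩
  -- step between two complement edges sharing a vertex
  have stepEE : ∀ (e e' : (joinEmpty G p).edgeSet) (he : Sum.inr e ∈ Sᶜ) (he' : Sum.inr e' ∈ Sᶜ)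
      (x : V ⊕ Fin p), x ∈ (e : Sym2 (V ⊕ Fin p)) → x ∈ (e' : Sym2 (V ⊕ Fin p)) →
      I.Reachable ⟨Sum.inr e, he⟩ ⟨Sum.inr e', he'⟩ := by
    intro e e' he he' x hx hx'
    by_cases heq : e = e'
    · subst heq; rfl
    · exact (SimpleGraph.Adj.reachable (mg_adj_ee.mpr ⟨heq, x, hx, hx'⟩))
  have key0 : ∀ (v : V) (q : Fin p) (hq : v ≠ f q) (h0 : v ≠ f q0),
      I.Reachable ⟨Sum.inr (crossE G p v q), crossE_mem_compl hq⟩ ⟨b, hb⟩ := by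
    intro v q hq h0
    refine (stepEE (crossE G p v q) (crossE G p v q0) (crossE_mem_compl hq)
      (crossE_mem_compl h0) (Sum.inl v) (Sym2.mem_mk_left _ _) (Sym2.mem_mk_left _ _)).trans ?_
    have hadj : I.Adj ⟨Sum.inr (crossE G p v q0), crossE_mem_compl h0⟩ ⟨b, hb⟩ :=
      mg_adj_ev.mpr (Sym2.mem_mk_right _ _)
    exact hadj.reachable
  have key : ∀ (v : V) (q : Fin p) (hq : v ≠ f q),
      I.Reachable ⟨Sum.inr (crossE G p v q), crossE_mem_compl hq⟩ ⟨b, hb⟩ := by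
    intro v q hq
    by_cases h0 : v = f q0
    · have hqq0 : q ≠ q0 := by rintro rfl; exact hq h0
      have hp2 : 1 < p := by
        rcases Nat.lt_or_ge 1 p with h | h
        · exact h
        · exact absurd (Fin.ext (by omega : q.1 = q0.1)) hqq0
      obtain ⟨v', hv1, hv2⟩ := hpick (by omega) (f q) (f q0)
      refine (stepEE (crossE G p v q) (crossE G p v' q) (crossE_mem_compl hq)
        (crossE_mem_compl hv1) (Sum.inr q) (Sym2.mem_mk_right _ _)
        (Sym2.mem_mk_right _ _)).trans (key0 v' q hv1 hv2)
    · exact key0 v q hq h0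
  have reachVq : ∀ (q : Fin p), I.Reachable ⟨Sum.inl (Sum.inr q), not_mem_domS_inl_inr⟩ ⟨b, hb⟩ := by
    intro q
    obtain ⟨v, hv⟩ := Fintype.exists_ne_of_one_lt_card (by omega) (f q)
    have hadj : I.Adj ⟨Sum.inl (Sum.inr q), not_mem_domS_inl_inr⟩
        ⟨Sum.inr (crossE G p v q), crossE_mem_compl hv⟩ :=
      mg_adj_ve.mpr (Sym2.mem_mk_right _ _)
    exact hadj.reachable.trans (key v q hv)
  have reachGedge : ∀ (a c : V) (h : s(Sum.inl a, Sum.inl c) ∈ (joinEmpty G p).edgeSet),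
      I.Reachable ⟨Sum.inr ⟨s(Sum.inl a, Sum.inl c), h⟩, gedge_mem_compl h⟩ ⟨b, hb⟩ := by
    intro a c h
    have hac : a ≠ c := fun heq => (joinEmpty G p).irrefl (heq ▸ (joinEmpty G p).mem_edgeSet.mp h)
    rcases em (a = f q0) with ha0 | ha0
    · have hc0 : c ≠ f q0 := fun hh => hac (ha0.trans hh.symm)
      exact (stepEE _ (crossE G p c q0) (gedge_mem_compl h) (crossE_mem_compl hc0)
        (Sum.inl c) (Sym2.mem_mk_right _ _) (Sym2.mem_mk_left _ _)).trans (key0 c q0 hc0 hc0)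
    · exact (stepEE _ (crossE G p a q0) (gedge_mem_compl h) (crossE_mem_compl ha0)
        (Sum.inl a) (Sym2.mem_mk_left _ _) (Sym2.mem_mk_left _ _)).trans (key0 a q0 ha0 ha0)
  have reachE : ∀ (e : (joinEmpty G p).edgeSet) (he : Sum.inr e ∈ Sᶜ),
      I.Reachable ⟨Sum.inr e, he⟩ ⟨b, hb⟩ := by
    rintro ⟨e, hE⟩ he
    induction e using Sym2.ind with
    | _ x y =>
      rcases x with a | q <;> rcases y with c | q'
      · exact reachGedge a c hE
      · -- e = s(inl a, inr q')
        have ha : a ≠ f q' := by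
          rintro rfl
          exact he (mem_domS_inr.mpr ⟨q', Subtype.ext rfl⟩)
        exact key a q' ha
      · -- e = s(inr q, inl c)
        have hc : c ≠ f q := by
          rintro rfl
          exact he (mem_domS_inr.mpr ⟨q, Subtype.ext Sym2.eq_swap⟩)
        have heq : (⟨Sum.inr ⟨s(Sum.inr q, Sum.inl c), hE⟩, he⟩ : ↥(Sᶜ)) =
            ⟨Sum.inr (crossE G p c q), crossE_mem_compl hc⟩ :=
          Subtype.ext (congrArg Sum.inr (Subtype.ext Sym2.eq_swap))
        rw [heq]
        exact key c q hc
      · exact absurd ((joinEmpty G p).mem_edgeSet.mp hE) (by simp [joinEmpty])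
  have reachVv : ∀ (v : V) (hv : Sum.inl (Sum.inl v) ∈ Sᶜ),
      I.Reachable ⟨Sum.inl (Sum.inl v), hv⟩ ⟨b, hb⟩ := by
    intro v hv
    obtain ⟨w, hw⟩ := exists_adj_of_conn hc h2 v
    have hE : s(Sum.inl v, Sum.inl w) ∈ (joinEmpty G p).edgeSet :=
      (joinEmpty G p).mem_edgeSet.mpr hw
    have hadj : I.Adj ⟨Sum.inl (Sum.inl v), hv⟩ ⟨Sum.inr ⟨_, hE⟩, gedge_mem_compl hE⟩ :=
      mg_adj_ve.mpr (Sym2.mem_mk_left _ _)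
    exact hadj.reachable.trans (reachGedge v w hE)
  have toB : ∀ (z : (V ⊕ Fin p) ⊕ (joinEmpty G p).edgeSet) (hz : z ∈ Sᶜ),
      I.Reachable ⟨z, hz⟩ ⟨b, hb⟩ := by
    rintro (⟨v | q⟩ | e) hz
    · exact reachVv v hz
    · exact reachVq q
    · exact reachE e hz
  rw [SimpleGraph.connected_iff]
  exact ⟨fun x y => (toB x.1 x.2).trans (toB y.1 y.2).symm, ⟨⟨b, hb⟩⟩⟩


end Stmt14Aux

theorem stmt14 {V : Type*} [Fintype V] (G : SimpleGraph V) (n p : ℕ)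
    (hn : Fintype.card V = n) (h2 : 2 ≤ n) (hc : G.Connected) (hp : p < n) :
    (n + p + 1) / 2 ≤ outConnDomNum (middleGraph (joinEmpty G p)) ∧
      outConnDomNum (middleGraph (joinEmpty G p)) ≤ n := by
  classical
  subst hn
  obtain ⟨f⟩ : Nonempty (Fin p ↪ V) :=
    Function.Embedding.nonempty_of_card_le (by rw [Fintype.card_fin]; omega)
  set T := {k | ∃ S, IsDomSet (middleGraph (joinEmpty G p)) S ∧
    ((middleGraph (joinEmpty G p)).induce Sᶜ).Connected ∧ S.ncard = k} with hT
  have hrfl : outConnDomNum (middleGraph (joinEmpty G p)) = sInf T := rfl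
  have hconn : ((middleGraph (joinEmpty G p)).induce (domS G p ⇑f)ᶜ).Connected := by
    rcases Nat.eq_zero_or_pos p with rfl | hppos
    · exact domS_compl_connected_zero hc h2 ⇑f
    · exact domS_compl_connected_pos hc h2 hppos hp f.injective
  have hmem : Fintype.card V ∈ T :=
    ⟨domS G p ⇑f, domS_isDom, hconn, ncard_domS f.injective hp.le⟩
  have hlow : Fintype.card V + p ≤ 2 * (sInf T) := by
    obtain ⟨S, hdom, -, hcard⟩ := Nat.sInf_mem (⟨_, hmem⟩ : T.Nonempty)
    set A : Set (V ⊕ Fin p) := Sum.inl ⁻¹' S with hA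
    set B : Set ((joinEmpty G p).edgeSet) := Sum.inr ⁻¹' S with hB
    have hSdecomp : S = Sum.inl '' A ∪ Sum.inr '' B := by
      ext x
      cases x with
      | inl y => simp [hA, Set.mem_preimage]
      | inr e => simp [hB, Set.mem_preimage]
    have hdisj : Disjoint (Sum.inl '' A : Set ((V ⊕ Fin p) ⊕ (joinEmpty G p).edgeSet))
        (Sum.inr '' B) := by
      rw [Set.disjoint_left]
      rintro x ⟨v, -, rfl⟩ ⟨e, -, h⟩
      exact Sum.inl_ne_inr h.symm
    have hSncard : S.ncard = A.ncard + B.ncard := by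
      rw [hSdecomp, Set.ncard_union_eq hdisj (Set.toFinite _) (Set.toFinite _),
        Set.ncard_image_of_injective _ Sum.inl_injective,
        Set.ncard_image_of_injective _ Sum.inr_injective]
    have hcov : ∀ x ∈ Aᶜ, ∃ e ∈ B, x ∈ (e : Sym2 (V ⊕ Fin p)) := by
      intro x hx
      obtain ⟨u, hu, heq | hadj⟩ := hdom (Sum.inl x)
      · rw [heq] at hu
        exact absurd hu hx
      · rcases u with y | e
        · exact (mg_not_adj_vv hadj).elim
        · exact ⟨e, hu, mg_adj_ev.mp hadj⟩
    have hsmall : ∀ e : (joinEmpty G p).edgeSet,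
        {x | x ∈ (e : Sym2 (V ⊕ Fin p))}.ncard ≤ 2 := by
      rintro ⟨e, -⟩
      induction e using Sym2.ind with
      | _ u v =>
        have hset : {x | x ∈ (s(u, v) : Sym2 (V ⊕ Fin p))} = {u, v} := by
          ext x; simp [Sym2.mem_iff]
        rw [hset]
        exact (Set.ncard_insert_le _ _).trans (by simp)
    have hbound := two_mul_bound Aᶜ B _ hcov hsmall
    have hAc := Set.ncard_add_ncard_compl A
    rw [Nat.card_eq_fintype_card, Fintype.card_sum, Fintype.card_fin] at hAc
    omega
  rw [hrfl]
  exact ⟨by omega, Nat.sInf_le hmem⟩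
end

section
/- For any wheel graph W_n of order n ≥ 5, γ̃_c(L(W_n)) < γ̃_c(M(W_n)), where L is the line graph and M the middle graph. -/
open SimpleGraph

section
variable (m : ℕ) (hm : 4 ≤ m)

def sp (i : ZMod m) : (wheelGraph m).edgeSet :=
  ⟨s(none, some i), by rw [SimpleGraph.mem_edgeSet]; trivial⟩

def ce (i : ZMod m) : (wheelGraph m).edgeSet :=
  ⟨s(some i, some (i+1)), by
    rw [SimpleGraph.mem_edgeSet]
    haveI : Fact (1 < m) := ⟨by omega⟩
    refine ⟨fun h => ?_, Or.inr (by ring)⟩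
    have : (1 : ZMod m) = 0 := by
      have := add_left_cancel (a := i) (b := (1:ZMod m)) (c := 0) (by rw [add_zero, ← h])
      exact this
    exact one_ne_zero this⟩

lemma sp_inj {a b : ZMod m} (h : sp m a = sp m b) : a = b := by
  have := congrArg Subtype.val h
  simp only [sp, Sym2.eq_iff] at this
  rcases this with ⟨_, h2⟩ | ⟨h1, _⟩
  · exact Option.some_injective _ h2
  · exact absurd h1 (by simp)

lemma zmod_two_ne_zero (hm : 4 ≤ m) : (2 : ZMod m) ≠ 0 := by
  intro h
  have : ((2:ℕ) : ZMod m) = 0 := by push_cast; exact h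
  rw [ZMod.natCast_eq_zero_iff] at this
  have := Nat.le_of_dvd (by norm_num) this
  omega

lemma zmod_one_ne_zero (hm : 4 ≤ m) : (1 : ZMod m) ≠ 0 := by
  intro h
  have : ((1:ℕ) : ZMod m) = 0 := by push_cast; exact h
  rw [ZMod.natCast_eq_zero_iff] at this
  have := Nat.le_of_dvd (by norm_num) this
  omega

lemma ce_inj {a b : ZMod m} (h : ce m hm a = ce m hm b) : a = b := by
  have := congrArg Subtype.val h
  simp only [ce, Sym2.eq_iff, Option.some.injEq] at this
  rcases this with ⟨h1, _⟩ | ⟨h1, h2⟩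
  · exact h1
  · exfalso
    have key : a = a + 2 := by rw [← h2] at h1; exact h1.trans (by ring)
    have h2 : (2 : ZMod m) = 0 := by
      have := add_left_cancel (a := a) (b := (0:ZMod m)) (c := 2) (by rw [add_zero, ← key])
      exact this.symm
    exact zmod_two_ne_zero m hm h2

lemma sp_ne_ce (a b : ZMod m) : sp m a ≠ ce m hm b := by
  intro h
  have := congrArg Subtype.val h
  simp only [sp, ce, Sym2.eq_iff] at this
  rcases this with ⟨h1, _⟩ | ⟨h1, _⟩ <;> simp at h1

lemma edge_rep (e : (wheelGraph m).edgeSet) :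
    (∃ i, (e : Sym2 (Option (ZMod m))) = s(none, some i)) ∨
    (∃ i, (e : Sym2 (Option (ZMod m))) = s(some i, some (i+1))) := by
  obtain ⟨z, hz⟩ := e
  induction z using Sym2.ind with
  | _ x y =>
    rw [SimpleGraph.mem_edgeSet] at hz
    match x, y with
    | none, none => exact hz.elim
    | none, some i => exact Or.inl ⟨i, rfl⟩
    | some i, none => exact Or.inl ⟨i, Sym2.eq_swap⟩
    | some i, some j =>
      rcases hz.2 with h | h
      · rw [sub_eq_iff_eq_add, add_comm] at h
        refine Or.inr ⟨j, ?_⟩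
        show s(some i, some j) = _
        rw [h]
        exact Sym2.eq_swap
      · rw [sub_eq_iff_eq_add, add_comm] at h
        refine Or.inr ⟨i, ?_⟩
        show s(some i, some j) = _
        rw [h]

end

section
variable (m : ℕ) (hm : 4 ≤ m)

def lineS : Set (wheelGraph m).edgeSet :=
  insert (sp m 0) ((fun j : ℕ => ce m hm ((3*j+2 : ℕ) : ZMod m)) '' Set.Iio (m/3))

lemma ce_ne_ce {a b : ZMod m} (hab : a ≠ b) : ce m hm a ≠ ce m hm b :=
  fun h => hab (ce_inj m hm h)

lemma zmod_succ_ne_self (hm : 4 ≤ m) (a : ZMod m) : a + 1 ≠ a := by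
  intro h
  exact zmod_one_ne_zero m hm (by
    have := add_left_cancel (a := a) (b := (1 : ZMod m)) (c := 0) (by rw [add_zero]; exact h)
    exact this)

lemma lineS_dom : IsDomSet (wheelGraph m).lineGraph (lineS m hm) := by
  haveI : NeZero m := ⟨by omega⟩
  intro v
  rcases edge_rep m v with ⟨i, hi⟩ | ⟨i, hi⟩
  · refine ⟨sp m 0, Set.mem_insert _ _, ?_⟩
    by_cases h : sp m 0 = v
    · exact Or.inl h
    · refine Or.inr ?_
      rw [SimpleGraph.lineGraph_adj_iff_exists]
      refine ⟨h, none, by simp [sp], by rw [hi]; simp⟩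
  · have hv : v = ce m hm i := Subtype.ext (by rw [hi]; rfl)
    set tv := i.val with htvdef
    have htv : tv < m := ZMod.val_lt i
    have hcast : ((tv : ℕ) : ZMod m) = i := ZMod.natCast_zmod_val i
    by_cases h0 : tv = 0 ∨ tv = m - 1
    · refine ⟨sp m 0, Set.mem_insert _ _, Or.inr ?_⟩
      rw [SimpleGraph.lineGraph_adj_iff_exists]
      refine ⟨hv ▸ sp_ne_ce m hm 0 i, some 0, by simp [sp], ?_⟩
      rw [hi]
      rcases h0 with h0 | h0
      · have : i = 0 := by rw [← hcast, h0]; simp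
        rw [this]; simp
      · have hi0 : i + 1 = 0 := by
          rw [← hcast, h0]
          have hh : ((m - 1 : ℕ) : ZMod m) + 1 = ((m - 1 + 1 : ℕ) : ZMod m) := by push_cast; ring
          rw [hh, (by omega : m - 1 + 1 = m), ZMod.natCast_self]
        rw [Sym2.mem_iff]; right; rw [hi0]
    · push_neg at h0
      obtain ⟨h1, h2⟩ := h0
      set j := (tv - 1) / 3 with hjdef
      have hj : j < m / 3 := by omega
      refine ⟨ce m hm ((3*j+2 : ℕ) : ZMod m), Set.mem_insert_iff.mpr (Or.inr ⟨j, hj, rfl⟩), ?_⟩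
      rcases (by omega : tv = 3*j+1 ∨ tv = 3*j+2 ∨ tv = 3*j+3) with ht | ht | ht
      · have hc : ((3*j+2 : ℕ) : ZMod m) = i + 1 := by
          rw [← hcast, ht]; push_cast; ring
        refine Or.inr ?_
        rw [SimpleGraph.lineGraph_adj_iff_exists]
        refine ⟨?_, some (i+1), ?_, by rw [hi]; simp⟩
        · rw [hv]; exact ce_ne_ce m hm (by rw [hc]; exact zmod_succ_ne_self m hm i)
        · simp [ce, hc]
      · have hc : ((3*j+2 : ℕ) : ZMod m) = i := by rw [← hcast, ht]
        exact Or.inl (by rw [hv, hc])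
      · have hc : ((3*j+2 : ℕ) : ZMod m) + 1 = i := by
          rw [← hcast, ht]; push_cast; ring
        refine Or.inr ?_
        rw [SimpleGraph.lineGraph_adj_iff_exists]
        refine ⟨?_, some i, ?_, by rw [hi]; simp⟩
        · rw [hv]
          refine ce_ne_ce m hm ?_
          rw [← hc]
          intro hh
          exact zmod_succ_ne_self m hm _ hh.symm
        · rw [show (some i : Option (ZMod m)) = some (((3*j+2 : ℕ) : ZMod m) + 1) by rw [hc]]
          simp [ce]
end

section
variable (m : ℕ) (hm : 4 ≤ m)

lemma sp_mem_compl (i : ZMod m) (hi : i ≠ 0) : sp m i ∈ (lineS m hm)ᶜ := by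
  intro h
  rcases Set.mem_insert_iff.mp h with h | ⟨x, -, hx⟩
  · exact hi (sp_inj m h)
  · exact sp_ne_ce m hm i _ hx.symm

lemma lineS_compl_conn : ((wheelGraph m).lineGraph.induce (lineS m hm)ᶜ).Connected := by
  haveI : NeZero m := ⟨by omega⟩
  have h1 : (1 : ZMod m) ≠ 0 := zmod_one_ne_zero m hm
  have key : ∀ x : ↥((lineS m hm)ᶜ),
      ((wheelGraph m).lineGraph.induce (lineS m hm)ᶜ).Reachable x
        ⟨sp m 1, sp_mem_compl m hm 1 h1⟩ := by
    have hspreach : ∀ (i : ZMod m) (hi : i ≠ 0),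
        ((wheelGraph m).lineGraph.induce (lineS m hm)ᶜ).Reachable
          ⟨sp m i, sp_mem_compl m hm i hi⟩ ⟨sp m 1, sp_mem_compl m hm 1 h1⟩ := by
      intro i hi
      by_cases h : i = 1
      · subst h; exact SimpleGraph.Reachable.refl _
      · apply SimpleGraph.Adj.reachable
        show (wheelGraph m).lineGraph.Adj (sp m i) (sp m 1)
        rw [SimpleGraph.lineGraph_adj_iff_exists]
        exact ⟨fun hh => h (sp_inj m hh), none, by simp [sp], by simp [sp]⟩
    rintro ⟨e, he⟩
    rcases edge_rep m e with ⟨i, hi⟩ | ⟨i, hi⟩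
    · have hv : e = sp m i := Subtype.ext hi
      have hine : i ≠ 0 := by
        intro h
        exact he (by rw [hv, h]; exact Set.mem_insert _ _)
      rw [show (⟨e, he⟩ : ↥((lineS m hm)ᶜ)) = ⟨sp m i, sp_mem_compl m hm i hine⟩ from
        Subtype.ext hv]
      exact hspreach i hine
    · have hv : e = ce m hm i := Subtype.ext hi
      by_cases hz : i = 0
      · apply SimpleGraph.Adj.reachable
        show (wheelGraph m).lineGraph.Adj e (sp m 1)
        rw [SimpleGraph.lineGraph_adj_iff_exists]
        refine ⟨fun hh => sp_ne_ce m hm 1 i (hh.symm.trans hv), some 1, ?_, by simp [sp]⟩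
        rw [hi, hz]
        simp
      · have hadj : ((wheelGraph m).lineGraph.induce (lineS m hm)ᶜ).Adj ⟨e, he⟩
            ⟨sp m i, sp_mem_compl m hm i hz⟩ := by
          show (wheelGraph m).lineGraph.Adj e (sp m i)
          rw [SimpleGraph.lineGraph_adj_iff_exists]
          exact ⟨fun hh => sp_ne_ce m hm i i (hh.symm.trans hv), some i, by rw [hi]; simp,
            by simp [sp]⟩
        exact hadj.reachable.trans (hspreach i hz)
  rw [SimpleGraph.connected_iff]
  exact ⟨fun a b => (key a).trans (key b).symm, ⟨⟨sp m 1, sp_mem_compl m hm 1 h1⟩⟩⟩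

lemma lineS_ncard : (lineS m hm).ncard = 1 + m / 3 := by
  haveI : NeZero m := ⟨by omega⟩
  have hinj : Set.InjOn (fun j : ℕ => ce m hm ((3*j+2 : ℕ) : ZMod m)) (Set.Iio (m/3)) := by
    intro a ha b hb h
    simp only [Set.mem_Iio] at ha hb
    have h' := congrArg ZMod.val (ce_inj m hm h)
    rw [ZMod.val_cast_of_lt (by omega), ZMod.val_cast_of_lt (by omega)] at h'
    omega
  have hfin : ((fun j : ℕ => ce m hm ((3*j+2:ℕ) : ZMod m)) '' Set.Iio (m/3)).Finite :=
    (Set.finite_Iio _).image _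
  have hnot : sp m 0 ∉ (fun j : ℕ => ce m hm ((3*j+2:ℕ) : ZMod m)) '' Set.Iio (m/3) := by
    rintro ⟨x, -, hx⟩
    exact sp_ne_ce m hm 0 _ hx.symm
  rw [lineS, Set.ncard_insert_of_notMem hnot hfin, Set.ncard_image_of_injOn hinj,
    ← Finset.coe_range, Set.ncard_coe_finset, Finset.card_range]
  omega
end

lemma middle_lb (m : ℕ) (hm : 4 ≤ m) (S : Set (Option (ZMod m) ⊕ (wheelGraph m).edgeSet))
    (hS : IsDomSet (middleGraph (wheelGraph m)) S) : m + 1 ≤ 2 * S.ncard := by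
  classical
  haveI : NeZero m := ⟨by omega⟩
  choose f hfS hf using fun v : Option (ZMod m) => hS (Sum.inl v)
  have hfib : ∀ a ∈ Finset.univ.image f, (Finset.univ.filter (fun x => f x = a)).card ≤ 2 := by
    intro a _
    match a with
    | Sum.inl w =>
      have hsub : Finset.univ.filter (fun x => f x = Sum.inl w) ⊆ {w} := by
        intro x hx
        simp only [Finset.mem_filter] at hx
        rcases hf x with h | h
        · rw [hx.2] at h
          simp only [Finset.mem_singleton]
          exact (Sum.inl.inj h).symm
        · rw [hx.2] at h
          exact h.elim
      exact (Finset.card_le_card hsub).trans (by simp)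
    | Sum.inr e =>
      obtain ⟨x, y, hxy⟩ : ∃ x y, (e : Sym2 (Option (ZMod m))) = s(x, y) := by
        generalize (e : Sym2 (Option (ZMod m))) = z
        induction z using Sym2.ind with
        | _ x y => exact ⟨x, y, rfl⟩
      have hsub : Finset.univ.filter (fun z => f z = Sum.inr e) ⊆ {x, y} := by
        intro z hz
        simp only [Finset.mem_filter] at hz
        rcases hf z with h | h
        · rw [hz.2] at h
          exact (nomatch h)
        · rw [hz.2] at h
          have hmem : z ∈ (e : Sym2 (Option (ZMod m))) := h
          rw [hxy, Sym2.mem_iff] at hmem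
          simpa using hmem
      exact (Finset.card_le_card hsub).trans ((Finset.card_insert_le _ _).trans (by simp))
  have hmain := Finset.card_le_mul_card_image (f := f) Finset.univ 2 hfib
  have himgcard : (Finset.univ.image f).card ≤ S.ncard := by
    have hsub : ↑(Finset.univ.image f) ⊆ S := by
      intro u hu
      simp only [Finset.coe_image, Set.mem_image] at hu
      obtain ⟨v, -, rfl⟩ := hu
      exact hfS v
    calc (Finset.univ.image f).card = (↑(Finset.univ.image f) : Set _).ncard :=
          (Set.ncard_coe_finset _).symm
      _ ≤ S.ncard := Set.ncard_le_ncard hsub (Set.toFinite S)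
  have hcardV : (Finset.univ : Finset (Option (ZMod m))).card = m + 1 := by
    rw [Finset.card_univ, Fintype.card_option, ZMod.card]
  omega

lemma middle_set_nonempty (m : ℕ) (hm : 4 ≤ m) :
    {k | ∃ S, IsDomSet (middleGraph (wheelGraph m)) S ∧
      ((middleGraph (wheelGraph m)).induce Sᶜ).Connected ∧ S.ncard = k}.Nonempty := by
  refine ⟨_, {x | x ≠ Sum.inl none}, ?_, ?_, rfl⟩
  · intro v
    match v with
    | Sum.inl none =>
      refine ⟨Sum.inr (sp m 0), by simp, Or.inr ?_⟩
      show (none : Option (ZMod m)) ∈ (sp m 0 : Sym2 _)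
      simp [sp]
    | Sum.inl (some i) => exact ⟨Sum.inl (some i), by simp, Or.inl rfl⟩
    | Sum.inr e => exact ⟨Sum.inr e, by simp, Or.inl rfl⟩
  · rw [SimpleGraph.connected_iff]
    constructor
    · rintro ⟨a, ha⟩ ⟨b, hb⟩
      simp only [Set.mem_compl_iff, Set.mem_setOf_eq, not_not] at ha hb
      subst ha
      subst hb
      exact SimpleGraph.Reachable.refl _
    · exact ⟨⟨Sum.inl none, by simp⟩⟩


theorem stmt18 (n : ℕ) (h5 : 5 ≤ n) :
    outConnDomNum (wheelGraph (n - 1)).lineGraph <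
      outConnDomNum (middleGraph (wheelGraph (n - 1))) := by 
  set m := n - 1 with hmdef
  have hm : 4 ≤ m := by omega
  have hub : outConnDomNum (wheelGraph m).lineGraph ≤ 1 + m / 3 :=
    Nat.sInf_le ⟨lineS m hm, lineS_dom m hm, lineS_compl_conn m hm, lineS_ncard m hm⟩
  obtain ⟨S, hdom, -, hcard⟩ := Nat.sInf_mem (middle_set_nonempty m hm)
  have hlb := middle_lb m hm S hdom
  have hrb : m + 1 ≤ 2 * outConnDomNum (middleGraph (wheelGraph m)) := by
    rw [outConnDomNum, ← hcard]
    exact hlb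
  omega
end
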